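/- arXiv:1701.07458 — 2 statements merged into one kernel-verified Lean document; each statement's English description precedes it below -/
import Mathlib

section
/- Let ω_1,…,ω_n be elements of R such that ω_i² = 0 for all i and ω_j ω_i = λ ω_i ω_j for all i < j. Then (ω_1 + ω_2 + ⋯ + ω_n)^n = [n]_λ! · ω_1 ω_2 ⋯ ω_n. -/
open Finset

noncomputable section

attribute [local instance] Classical.propDecidable

/-- Ordered product `f 0 * f 1 * ... * f (n-1)` of noncommuting elements. -/
def ordProd {R : Type*} [Monoid R] {n : ℕ} (f : Fin n → R) : R :=
  (List.ofFn f).prod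

/-- The generalized sign `(−q)_σ` with column labels `cols`:
`(−1)^{ℓ(σ)} ∏_{k<k', σ(k)>σ(k')} q_{cols(σ(k')) cols(σ(k))}`. -/
def qSign {N t : ℕ} (q : Fin N → Fin N → ℂ) (cols : Fin t → Fin N)
    (σ : Equiv.Perm (Fin t)) : ℂ :=
  ∏ ij ∈ Finset.univ.filter
      (fun ij : Fin t × Fin t => ij.1 < ij.2 ∧ σ ij.2 < σ ij.1),
    (-(q (cols (σ ij.2)) (cols (σ ij.1))))

/-- The quantum minor `det_q(A^{rows}_{cols})`. -/
def qMinor {R : Type*} [Ring R] [Algebra ℂ R] {N t : ℕ}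
    (q : Fin N → Fin N → ℂ) (rows cols : Fin t → Fin N)
    (a : Fin N → Fin N → R) : R :=
  ∑ σ : Equiv.Perm (Fin t),
    qSign q cols σ • ordProd (fun k => a (rows k) (cols (σ k)))

/-- Quantum row determinant `rdet(A) = Σ_σ (−q)_σ a_{1σ(1)} ⋯ a_{nσ(n)}`. -/
def rdet {R : Type*} [Ring R] [Algebra ℂ R] {N : ℕ}
    (q : Fin N → Fin N → ℂ) (a : Fin N → Fin N → R) : R :=
  ∑ σ : Equiv.Perm (Fin N),
    qSign q id σ • ordProd (fun i => a i (σ i))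

/-- Quantum column determinant `cdet(A) = Σ_σ (−p)_σ a_{σ(1)1} ⋯ a_{σ(n)n}`. -/
def cdet {R : Type*} [Ring R] [Algebra ℂ R] {N : ℕ}
    (p : Fin N → Fin N → ℂ) (a : Fin N → Fin N → R) : R :=
  ∑ σ : Equiv.Perm (Fin N),
    qSign p id σ • ordProd (fun i => a (σ i) i)

/-- Conditions on the parameters: they are nonzero, `p_{ii} = q_{ii} = 1`,
and `p_{ij}p_{ji} = q_{ij}q_{ji} = 1`. -/
def ParamConds {N : ℕ} (p q : Fin N → Fin N → ℂ) : Prop :=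
  (∀ i j, p i j ≠ 0 ∧ q i j ≠ 0) ∧
  (∀ i, p i i = 1 ∧ q i i = 1) ∧
  (∀ i j, p i j * p j i = 1 ∧ q i j * q j i = 1)

/-- The `(p,λ)`-condition: `p_{ij} q_{ij} = λ` for `i < j`. -/
def PLambdaCond {N : ℕ} (p q : Fin N → Fin N → ℂ) (lam : ℂ) : Prop :=
  ∀ i j : Fin N, i < j → p i j * q i j = lam

/-- `A = (a_{ij})` is a multiparameter quantum matrix for the parameters `p, q`. -/
def IsQuantumMatrix {R : Type*} [Ring R] [Algebra ℂ R] {N : ℕ}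
    (p q : Fin N → Fin N → ℂ) (a : Fin N → Fin N → R) : Prop :=
  (∀ i k l : Fin N, k < l → a i k * a i l = q k l • (a i l * a i k)) ∧
  (∀ i j k : Fin N, i < j → a i k * a j k = p i j • (a j k * a i k)) ∧
  (∀ i j k l : Fin N, i < j → k < l →
    a i k * a j l - (q k l / q i j) • (a j l * a i k)
      = q k l • (a i l * a j k) - (q i j)⁻¹ • (a j k * a i l)) ∧
  (∀ i j k l : Fin N, i < j → k < l →
    a i k * a j l - (p i j / p k l) • (a j l * a i k)
      = p i j • (a j k * a i l) - (p k l)⁻¹ • (a i l * a j k))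

/-- `x_1, …, x_n` satisfy the `q`-exterior relations. -/
def QExterior {R : Type*} [Ring R] [Algebra ℂ R] {N : ℕ}
    (q : Fin N → Fin N → ℂ) (x : Fin N → R) : Prop :=
  (∀ i, x i * x i = 0) ∧
  (∀ i j : Fin N, i < j → x j * x i = -(q i j) • (x i * x j))

/-- The quantum integer `[k]_λ = 1 + λ + ⋯ + λ^{k−1}`. -/
def qNum (lam : ℂ) (k : ℕ) : ℂ := ∑ i ∈ Finset.range k, lam ^ i

/-- The quantum factorial `[n]_λ! = [1]_λ [2]_λ ⋯ [n]_λ`. -/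
def qFact (lam : ℂ) (n : ℕ) : ℂ := ∏ k ∈ Finset.range n, qNum lam (k + 1)

/-- The index `2i−1` (1-based), i.e. position `2i` (0-based), inside `Fin (2n)`. -/
def pfIdx1 {n : ℕ} (i : Fin n) : Fin (2 * n) :=
  ⟨2 * i.1, by have := i.isLt; omega⟩

/-- The index `2i` (1-based), i.e. position `2i+1` (0-based), inside `Fin (2n)`. -/
def pfIdx2 {n : ℕ} (i : Fin n) : Fin (2 * n) :=
  ⟨2 * i.1 + 1, by have := i.isLt; omega⟩

/-- The multiparameter quantum Pfaffian
`Pf_q(B) = Σ_σ (−q)_σ b_{σ(1)σ(2)} ⋯ b_{σ(2n−1)σ(2n)}`, the sum over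
permutations `σ` of `{1,…,2n}` with `σ(2i−1) < σ(2i)` for all `i`. -/
def Pf {R : Type*} [Ring R] [Algebra ℂ R] {n : ℕ}
    (q : Fin (2 * n) → Fin (2 * n) → ℂ) (b : Fin (2 * n) → Fin (2 * n) → R) : R :=
  ∑ σ ∈ Finset.univ.filter
      (fun σ : Equiv.Perm (Fin (2 * n)) => ∀ i : Fin n, σ (pfIdx1 i) < σ (pfIdx2 i)),
    qSign q id σ • ordProd (fun i : Fin n => b (σ (pfIdx1 i)) (σ (pfIdx2 i)))

/-- Sub-Pfaffian along an index map `f` (typically the increasing enumeration of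
a subset of the indices): the parameters and the entries are restricted along `f`. -/
def PfOn {R : Type*} [Ring R] [Algebra ℂ R] {N m : ℕ}
    (q : Fin N → Fin N → ℂ) (b : Fin N → Fin N → R) (f : Fin (2 * m) → Fin N) : R :=
  Pf (fun i j => q (f i) (f j)) (fun i j => b (f i) (f j))

/-- `inv(I, J) = ∏_{i ∈ I, j ∈ J, i > j} (−q_{ji})`. -/
def invQ {N : ℕ} (q : Fin N → Fin N → ℂ) (I J : Finset (Fin N)) : ℂ :=
  ∏ i ∈ I, ∏ j ∈ J, if j < i then -(q j i) else 1

/-- The position `k·m + r` within `Fin (m·n)`, i.e. the `r`-th index of the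
`k`-th block of size `m`. -/
def blockIdx {m n : ℕ} (k : Fin n) (r : Fin m) : Fin (m * n) :=
  ⟨k.1 * m + r.1, by
    have hk : k.1 + 1 ≤ n := k.isLt
    have hr : r.1 < m := r.isLt
    calc k.1 * m + r.1 < k.1 * m + m := Nat.add_lt_add_left hr _
      _ = (k.1 + 1) * m := (Nat.succ_mul k.1 m).symm
      _ ≤ n * m := Nat.mul_le_mul hk (Nat.le_refl m)
      _ = m * n := Nat.mul_comm n m⟩

/-- The multiparameter quantum hyper-Pfaffian
`Pf_q(B) = Σ_{σ∈Π} (−q)_σ b_{σ(1)…σ(m)} ⋯ b_{σ(m(n−1)+1)…σ(mn)}`, where `Π` is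
the set of permutations of `{1,…,mn}` increasing on each consecutive block of
length `m`. -/
def hPf {R : Type*} [Ring R] [Algebra ℂ R] {m n : ℕ}
    (q : Fin (m * n) → Fin (m * n) → ℂ) (b : (Fin m → Fin (m * n)) → R) : R :=
  ∑ σ ∈ Finset.univ.filter
      (fun σ : Equiv.Perm (Fin (m * n)) =>
        ∀ k : Fin n, StrictMono (fun r : Fin m => σ (blockIdx k r))),
    qSign q id σ • ordProd (fun k : Fin n => b (fun r => σ (blockIdx k r)))

/-- The increasing enumeration of `{1,…,n} \ {k}` (the "hat" of `k`). -/
def hatIdx {n : ℕ} (k : Fin n) (r : Fin (n - 1)) : Fin n :=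
  if h : r.1 < k.1 then ⟨r.1, by have := k.isLt; omega⟩
  else ⟨r.1 + 1, by have := r.isLt; omega⟩

/-- The increasing enumeration of `{s+1,…,n}`. -/
def tailIdx {n : ℕ} (s : ℕ) (k : Fin (n - s)) : Fin n :=
  ⟨s + k.1, by have := k.isLt; omega⟩

/-- The increasing enumeration of `{1,…,t}` inside `{1,…,n}`. -/
def headIdx {n : ℕ} (t : ℕ) (ht : t ≤ n) (k : Fin t) : Fin n :=
  ⟨k.1, lt_of_lt_of_le k.isLt ht⟩

/-- `σ` is a `t`-shuffle: `σ(1) < ⋯ < σ(t)` and `σ(t+1) < ⋯ < σ(n)`. -/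
def IsShuffle {n : ℕ} (t : ℕ) (σ : Equiv.Perm (Fin n)) : Prop :=
  (∀ k l : Fin n, k < l → l.1 < t → σ k < σ l) ∧
  (∀ k l : Fin n, k < l → t ≤ k.1 → σ k < σ l)


lemma ordProd_succ' {R : Type*} [Monoid R] {n : ℕ} (f : Fin (n + 1) → R) :
    ordProd f = ordProd (fun i : Fin n => f i.castSucc) * f (Fin.last n) := by
  rw [ordProd, List.ofFn_succ', List.prod_concat]; rfl

lemma ordProd_mul_self_eq_zero {R : Type*} [Ring R] [Algebra ℂ R] (lam : ℂ) :
    ∀ {n : ℕ} (f : Fin n → R), (∀ i, f i * f i = 0) →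
    (∀ i j : Fin n, i < j → f j * f i = lam • (f i * f j)) →
    ∀ i, ordProd f * f i = 0 := by
  intro n
  induction n with
  | zero => intro f _ _ i; exact absurd i.isLt (by omega)
  | succ m ih =>
    intro f h0 hcomm i
    rw [ordProd_succ']
    set f' : Fin m → R := fun i => f i.castSucc with hf'
    rcases Fin.eq_castSucc_or_eq_last i with ⟨j, rfl⟩ | rfl
    · have hlt : (j.castSucc : Fin (m+1)) < Fin.last m := j.castSucc_lt_last
      rw [mul_assoc, hcomm _ _ hlt, mul_smul_comm, ← mul_assoc]
      have : ordProd f' * f' j = 0 := by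
        apply ih f' (fun i => h0 i.castSucc)
        intro i j hij
        exact hcomm _ _ (by simpa using hij)
      rw [show ordProd f' * f j.castSucc = 0 from this, zero_mul, smul_zero]
    · rw [mul_assoc, h0, mul_zero]

lemma qbin_pow {R : Type*} [Ring R] [Algebra ℂ R] (lam : ℂ) (a b : R)
    (hba : b * a = lam • (a * b)) (hbb : b * b = 0) :
    ∀ m : ℕ, (a + b) ^ (m + 1) = a ^ (m + 1) + qNum lam (m + 1) • (a ^ m * b) := by
  intro m
  induction m with
  | zero => simp [qNum]
  | succ k ih =>
    have hnum : qNum lam (k + 2) = 1 + qNum lam (k + 1) * lam := by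
      have h := geom_sum_succ (x := lam) (n := k + 1)
      simp only [qNum]
      rw [h]; ring
    rw [pow_succ, ih, add_mul, mul_add, mul_add, smul_mul_assoc, smul_mul_assoc,
      mul_assoc, mul_assoc, hba, hbb, mul_zero, smul_zero, add_zero,
      mul_smul_comm, smul_smul, hnum]
    rw [← pow_succ, ← mul_assoc, ← pow_succ]
    rw [add_smul, one_smul, add_assoc]

/-- If `ω_i² = 0` and `ω_j ω_i = λ ω_i ω_j` for `i < j`, then
`(ω_1 + ⋯ + ω_n)^n = [n]_λ! · ω_1 ω_2 ⋯ ω_n`. -/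
theorem sum_pow_eq_qFact_smul_prod {R : Type*} [Ring R] [Algebra ℂ R]
    {n : ℕ} (hn : 1 ≤ n) (lam : ℂ)
    (ω : Fin n → R) (h0 : ∀ i, ω i * ω i = 0)
    (hcomm : ∀ i j : Fin n, i < j → ω j * ω i = lam • (ω i * ω j)) :
    (∑ i, ω i) ^ n = qFact lam n • ordProd ω := by
  obtain ⟨m, rfl⟩ : ∃ m, n = m + 1 := ⟨n - 1, (Nat.succ_pred_eq_of_pos hn).symm⟩
  clear hn
  induction m with
  | zero =>
    simp [qFact, qNum, ordProd, Fin.sum_univ_one]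
  | succ m ih =>
    set f' : Fin (m + 1) → R := fun i => ω i.castSucc with hf'
    set a : R := ∑ i, f' i with ha
    set b : R := ω (Fin.last (m + 1)) with hb
    have h0' : ∀ i, f' i * f' i = 0 := fun i => h0 i.castSucc
    have hcomm' : ∀ i j : Fin (m + 1), i < j → f' j * f' i = lam • (f' i * f' j) :=
      fun i j hij => hcomm _ _ (by simpa using hij)
    have hbb : b * b = 0 := h0 _
    have hba : b * a = lam • (a * b) := by
      rw [ha, Finset.mul_sum, Finset.sum_mul, Finset.smul_sum]
      refine Finset.sum_congr rfl fun i _ => ?_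
      exact hcomm _ _ i.castSucc_lt_last
    have hsum : (∑ i, ω i) = a + b := Fin.sum_univ_castSucc ω
    have hIH : a ^ (m + 1) = qFact lam (m + 1) • ordProd f' :=
      ih f' h0' hcomm'
    have hzero : a ^ (m + 2) = 0 := by
      rw [pow_succ, hIH, smul_mul_assoc, Finset.mul_sum]
      have : ∀ i ∈ Finset.univ, ordProd f' * f' i = 0 :=
        fun i _ => ordProd_mul_self_eq_zero lam f' h0' hcomm' i
      rw [Finset.sum_congr rfl this, Finset.sum_const, smul_zero, smul_zero]
    rw [hsum, qbin_pow lam a b hba hbb (m + 1), hzero, zero_add, hIH,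
      smul_mul_assoc, smul_smul, ordProd_succ' ω]
    have : qFact lam (m + 2) = qFact lam (m + 1) * qNum lam (m + 2) := by
      simp [qFact, Finset.prod_range_succ]
    rw [this, mul_comm]
end
end

section
/- Let A = (a_{ij}) be a 2n×2n multiparameter quantum matrix over R with the (p,λ)-condition and λ ≠ −1, and let B = (b_{ij}) be a 2n×2n array of elements of R with b_{ii} = 0 for all i and b_{ji} = −q_{ij} b_{ij} for all i < j, such that every entry of B commutes with every entry of A. Let C = ABAᵀ, i.e., c_{ij} = Σ_{k,l} a_{ik} b_{kl} a_{jl}. Then c_{ji} = −q_{ij} c_{ij} for all i < j, and Pf_p(C) = det_q(A) · Pf_p(B), where Pf_p is the quantum Pfaffian formed with the signs (−p)_σ. -/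
open Finset

noncomputable section

attribute [local instance] Classical.propDecidable

namespace PfAux

open Finset

variable {R : Type*} [Ring R] [Algebra ℂ R]

lemma ordProd_zero (f : Fin 0 → R) : ordProd f = 1 := rfl

lemma ordProd_succ {n : ℕ} (f : Fin (n+1) → R) :
    ordProd f = f 0 * ordProd (fun i : Fin n => f i.succ) := by
  unfold ordProd; rw [List.ofFn_succ, List.prod_cons]

lemma ordProd_eq_zero {n : ℕ} {f : Fin n → R} (i : Fin n) (h : f i = 0) :
    ordProd f = 0 := by
  unfold ordProd
  exact List.prod_eq_zero (by rw [List.mem_ofFn]; exact ⟨i, h⟩)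

lemma ordProd_congr {n : ℕ} {f g : Fin n → R} (h : ∀ i, f i = g i) :
    ordProd f = ordProd g := by
  have : f = g := funext h
  rw [this]

lemma ordProd_smul {n : ℕ} (z : Fin n → ℂ) (f : Fin n → R) :
    ordProd (fun i => z i • f i) = (∏ i, z i) • ordProd f := by
  induction n with
  | zero => simp [ordProd_zero]
  | succ n ih =>
    rw [ordProd_succ, ordProd_succ f, Fin.prod_univ_succ]
    have := ih (fun i => z i.succ) (fun i => f i.succ)
    rw [this, smul_mul_assoc, mul_smul_comm, smul_smul]

lemma ordProd_mul_split {n : ℕ} (β γ : Fin n → R)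
    (h : ∀ i j : Fin n, i < j → Commute (γ i) (β j)) :
    ordProd (fun i => β i * γ i) = ordProd β * ordProd γ := by
  induction n with
  | zero => simp [ordProd_zero]
  | succ n ih =>
    rw [ordProd_succ, ordProd_succ β, ordProd_succ γ]
    have hih := ih (fun i => β i.succ) (fun i => γ i.succ)
      (fun i j hij => h i.succ j.succ (by simpa using hij))
    rw [hih]
    have hcomm : Commute (γ 0) (ordProd (fun i : Fin n => β i.succ)) := by
      apply Commute.list_prod_right
      intro x hx
      rw [List.mem_ofFn] at hx
      obtain ⟨i, rfl⟩ := hx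
      exact h 0 i.succ (Fin.succ_pos i)
    rw [mul_assoc (β 0), ← mul_assoc (γ 0), hcomm.eq, mul_assoc, ← mul_assoc, ← mul_assoc]

lemma ordProd_sum {ι : Type*} [Fintype ι] (n : ℕ) (F : Fin n → ι → R) :
    ordProd (fun i => ∑ e : ι, F i e) = ∑ φ : Fin n → ι, ordProd (fun i => F i (φ i)) := by
  induction n with
  | zero =>
    rw [Fintype.sum_unique]
    rfl
  | succ n ih =>
    have h1 : ordProd (fun i : Fin (n+1) => ∑ e : ι, F i e)
        = (∑ e : ι, F 0 e) * ∑ φ : Fin n → ι, ordProd (fun i => F i.succ (φ i)) := by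
      rw [ordProd_succ]
      rw [ih (fun i e => F i.succ e)]
    rw [h1, Finset.sum_mul]
    rw [← Equiv.sum_comp (Fin.consEquiv (fun _ : Fin (n+1) => ι))
        (fun φ : Fin (n+1) → ι => ordProd (fun i => F i (φ i)))]
    rw [Fintype.sum_prod_type]
    apply Finset.sum_congr rfl
    intro e _
    rw [Finset.mul_sum]
    apply Finset.sum_congr rfl
    intro φ' _
    rw [ordProd_succ]
    simp only [Fin.consEquiv_apply, Fin.cons_zero, Fin.cons_succ]

def ordF {n : ℕ} (f : Fin n → R) : ℕ → R := fun t => if h : t < n then f ⟨t, h⟩ else 1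

lemma ordProd_eq_range {n : ℕ} (f : Fin n → R) :
    ordProd f = ((List.range n).map (ordF f)).prod := by
  induction n with
  | zero => rfl
  | succ n ih =>
    rw [ordProd_succ, List.range_succ_eq_map, List.map_cons, List.prod_cons, List.map_map]
    congr 1
    · rw [ih (fun i => f i.succ)]
      congr 1
      apply List.map_congr_left
      intro t ht
      rw [List.mem_range] at ht
      simp only [ordF, Function.comp_apply]
      rw [dif_pos ht, dif_pos (Nat.succ_lt_succ ht)]
      rfl

lemma range_pair_prod (F : ℕ → R) (n : ℕ) :
    ((List.range (2*n)).map F).prod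
      = ((List.range n).map (fun i => F (2*i) * F (2*i+1))).prod := by
  induction n with
  | zero => rfl
  | succ n ih =>
    have h2 : 2*(n+1) = (2*n+1)+1 := by ring
    rw [h2, List.range_succ, List.range_succ (n := 2*n), List.map_append, List.prod_append,
        List.map_append, List.prod_append, ih, List.range_succ, List.map_append,
        List.prod_append]
    simp [mul_assoc]

lemma pairJoin {n : ℕ} (f : Fin (2*n) → R) :
    ordProd (fun i : Fin n => f (pfIdx1 i) * f (pfIdx2 i)) = ordProd f := by
  rw [ordProd_eq_range f, ordProd_eq_range (fun i : Fin n => f (pfIdx1 i) * f (pfIdx2 i)),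
    range_pair_prod (ordF f) n]
  congr 1
  apply List.map_congr_left
  intro t ht
  rw [List.mem_range] at ht
  simp only [ordF]
  rw [dif_pos ht, dif_pos (show 2*t < 2*n by omega), dif_pos (show 2*t+1 < 2*n by omega)]
  rfl

lemma ordProd_split {n : ℕ} (f : Fin n → R) (t0 t1 : Fin n) (h01 : (t0:ℕ) + 1 = (t1:ℕ)) :
    ordProd f = ((List.ofFn f).take (t0:ℕ)).prod * (f t0 * f t1)
      * ((List.ofFn f).drop ((t0:ℕ)+2)).prod := by
  have hlen : (List.ofFn f).length = n := List.length_ofFn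
  have ht1 : (t0:ℕ) + 1 < n := h01 ▸ t1.isLt
  have h1 : (List.ofFn f).drop (t0:ℕ) = f t0 :: (List.ofFn f).drop ((t0:ℕ)+1) := by
    rw [List.drop_eq_getElem_cons (by omega)]
    congr 1
    rw [List.getElem_ofFn]
  have h2 : (List.ofFn f).drop ((t0:ℕ)+1) = f t1 :: (List.ofFn f).drop ((t0:ℕ)+2) := by
    rw [List.drop_eq_getElem_cons (by omega)]
    congr 1
    rw [List.getElem_ofFn]
    congr 1
    exact Fin.ext h01
  calc ordProd f = ((List.ofFn f).take (t0:ℕ)).prod * ((List.ofFn f).drop (t0:ℕ)).prod :=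
        (List.prod_take_mul_prod_drop _ _).symm
    _ = _ := by rw [h1, h2, List.prod_cons, List.prod_cons]; simp only [mul_assoc]

lemma take_ofFn_eq {n : ℕ} (f g : Fin n → R) (t : ℕ)
    (h : ∀ u : Fin n, (u:ℕ) < t → f u = g u) :
    (List.ofFn f).take t = (List.ofFn g).take t := by
  apply List.ext_getElem
  · simp
  · intro i h1 h2
    simp only [List.length_take, List.length_ofFn, lt_min_iff] at h1
    simp only [List.getElem_take, List.getElem_ofFn]
    exact h _ h1.1

lemma drop_ofFn_eq {n : ℕ} (f g : Fin n → R) (t : ℕ)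
    (h : ∀ u : Fin n, t ≤ (u:ℕ) → f u = g u) :
    (List.ofFn f).drop t = (List.ofFn g).drop t := by
  apply List.ext_getElem
  · simp
  · intro i h1 h2
    simp only [List.getElem_drop, List.getElem_ofFn]
    apply h
    simp only [Fin.val_mk]
    omega

lemma ordProd_swap_adj {n : ℕ} (f : Fin n → R) (t0 t1 : Fin n) (h01 : (t0:ℕ) + 1 = (t1:ℕ))
    (z : ℂ) (hz : f t0 * f t1 = z • (f t1 * f t0)) :
    ordProd f = z • ordProd (f ∘ (Equiv.swap t0 t1)) := by
  have hne : t0 ≠ t1 := by intro hh; rw [hh] at h01; omega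
  rw [ordProd_split f t0 t1 h01, ordProd_split (f ∘ (Equiv.swap t0 t1)) t0 t1 h01]
  have e1 : (List.ofFn (f ∘ (Equiv.swap t0 t1))).take (t0:ℕ) = (List.ofFn f).take (t0:ℕ) := by
    apply take_ofFn_eq
    intro u hu
    simp only [Function.comp_apply]
    rw [Equiv.swap_apply_of_ne_of_ne]
    · intro hh; rw [hh] at hu; omega
    · intro hh; rw [hh] at hu; omega
  have e2 : (List.ofFn (f ∘ (Equiv.swap t0 t1))).drop ((t0:ℕ)+2)
      = (List.ofFn f).drop ((t0:ℕ)+2) := by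
    apply drop_ofFn_eq
    intro u hu
    simp only [Function.comp_apply]
    rw [Equiv.swap_apply_of_ne_of_ne]
    · intro hh; rw [hh] at hu; omega
    · intro hh; rw [hh] at hu; omega
  have e3 : (f ∘ (Equiv.swap t0 t1)) t0 = f t1 := by
    simp [Equiv.swap_apply_left]
  have e4 : (f ∘ (Equiv.swap t0 t1)) t1 = f t0 := by
    simp [Equiv.swap_apply_right]
  rw [e1, e2, e3, e4, hz, mul_smul_comm, smul_mul_assoc]

end PfAux
namespace PfAux

open Finset

variable {α : Type*} {M : ℕ}

def Wset (Q : α → α → Prop) (m : Fin M → α) : Finset (Fin M × Fin M) :=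
  Finset.univ.filter (fun ij : Fin M × Fin M => ij.1 < ij.2 ∧ Q (m ij.1) (m ij.2))

def Wprod (Q : α → α → Prop) (G : α → α → ℂ) (m : Fin M → α) : ℂ :=
  ∏ ij ∈ Wset Q m, G (m ij.1) (m ij.2)

def WsetEx (Q : α → α → Prop) (m : Fin M → α) (t0 t1 : Fin M) : Finset (Fin M × Fin M) :=
  Finset.univ.filter
    (fun ij : Fin M × Fin M => ij.1 < ij.2 ∧ Q (m ij.1) (m ij.2) ∧ ij ≠ (t0, t1))

lemma mem_Wset {Q : α → α → Prop} {m : Fin M → α} {ij : Fin M × Fin M} :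
    ij ∈ Wset Q m ↔ ij.1 < ij.2 ∧ Q (m ij.1) (m ij.2) := by
  unfold Wset
  constructor
  · intro h
    exact (Finset.mem_filter.mp h).2
  · intro h
    exact Finset.mem_filter.mpr ⟨Finset.mem_univ _, h⟩

lemma swap_val (t0 t1 x : Fin M) :
    ((Equiv.swap t0 t1 x : Fin M) : ℕ)
      = if (x:ℕ) = (t0:ℕ) then (t1:ℕ) else if (x:ℕ) = (t1:ℕ) then (t0:ℕ) else (x:ℕ) := by
  rcases eq_or_ne x t0 with rfl | hx0
  · rw [Equiv.swap_apply_left, if_pos rfl]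
  · rcases eq_or_ne x t1 with rfl | hx1
    · rw [Equiv.swap_apply_right, if_neg (fun h => hx0 (Fin.ext h)), if_pos rfl]
    · rw [Equiv.swap_apply_of_ne_of_ne hx0 hx1,
        if_neg (fun h => hx0 (Fin.ext h)), if_neg (fun h => hx1 (Fin.ext h))]

lemma swap_lt {t0 t1 : Fin M} (h01 : (t0:ℕ) + 1 = (t1:ℕ)) {u v : Fin M}
    (huv : u < v) (hne : (u, v) ≠ (t0, t1)) :
    Equiv.swap t0 t1 u < Equiv.swap t0 t1 v := by
  have hne' : ¬ ((u:ℕ) = (t0:ℕ) ∧ (v:ℕ) = (t1:ℕ)) := by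
    rintro ⟨hh1, hh2⟩
    exact hne (by rw [show u = t0 from Fin.ext hh1, show v = t1 from Fin.ext hh2])
  rw [Fin.lt_def] at huv ⊢
  rw [swap_val, swap_val]
  by_cases hc : (u:ℕ) = (t0:ℕ)
  · have hv : (v:ℕ) ≠ (t1:ℕ) := fun h => hne' ⟨hc, h⟩
    split_ifs <;> omega
  · split_ifs <;> omega

lemma swap_pair_ne {t0 t1 : Fin M} (h01 : (t0:ℕ) + 1 = (t1:ℕ)) {x y : Fin M} (hxy : x < y) :
    (Equiv.swap t0 t1 x, Equiv.swap t0 t1 y) ≠ (t0, t1) := by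
  intro heq
  have hh1 : Equiv.swap t0 t1 x = t0 := congrArg Prod.fst heq
  have hh2 : Equiv.swap t0 t1 y = t1 := congrArg Prod.snd heq
  have hx : x = t1 := by
    have := congrArg (Equiv.swap t0 t1) hh1
    rwa [Equiv.swap_apply_self, Equiv.swap_apply_left] at this
  have hy : y = t0 := by
    have := congrArg (Equiv.swap t0 t1) hh2
    rwa [Equiv.swap_apply_self, Equiv.swap_apply_right] at this
  rw [hx, hy, Fin.lt_def] at hxy
  omega

lemma swap_pair_inj (t0 t1 : Fin M) :
    Function.Injective
      (fun ij : Fin M × Fin M => (Equiv.swap t0 t1 ij.1, Equiv.swap t0 t1 ij.2)) := by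
  intro x y h
  have hh1 : Equiv.swap t0 t1 x.1 = Equiv.swap t0 t1 y.1 := congrArg Prod.fst h
  have hh2 : Equiv.swap t0 t1 x.2 = Equiv.swap t0 t1 y.2 := congrArg Prod.snd h
  exact Prod.ext ((Equiv.swap t0 t1).injective hh1) ((Equiv.swap t0 t1).injective hh2)

lemma WsetEx_image (Q : α → α → Prop) (m : Fin M → α) (t0 t1 : Fin M)
    (h01 : (t0:ℕ) + 1 = (t1:ℕ)) :
    WsetEx Q (m ∘ (Equiv.swap t0 t1)) t0 t1
      = Finset.image (fun ij : Fin M × Fin M => (Equiv.swap t0 t1 ij.1, Equiv.swap t0 t1 ij.2))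
          (WsetEx Q m t0 t1) := by
  ext ⟨u, v⟩
  simp only [WsetEx, Finset.mem_filter, Finset.mem_image, Finset.mem_univ, true_and,
    Function.comp_apply, Prod.exists]
  constructor
  · rintro ⟨huv, hQ, hne⟩
    refine ⟨Equiv.swap t0 t1 u, Equiv.swap t0 t1 v, ⟨swap_lt h01 huv hne, hQ, swap_pair_ne h01 huv⟩, ?_⟩
    simp [Equiv.swap_apply_self]
  · rintro ⟨x, y, ⟨hxy, hQ, hne⟩, heq⟩
    have hh1 : Equiv.swap t0 t1 x = u := congrArg Prod.fst heq
    have hh2 : Equiv.swap t0 t1 y = v := congrArg Prod.snd heq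
    subst hh1; subst hh2
    refine ⟨swap_lt h01 hxy hne, ?_, swap_pair_ne h01 hxy⟩
    simpa [Equiv.swap_apply_self] using hQ

lemma Wset_eq_ex (Q : α → α → Prop) (m : Fin M → α) (t0 t1 : Fin M)
    (h1 : ¬ Q (m t0) (m t1)) : Wset Q m = WsetEx Q m t0 t1 := by
  ext ij
  simp only [Wset, WsetEx, mem_filter, mem_univ, true_and]
  constructor
  · rintro ⟨huv, hQ⟩
    refine ⟨huv, hQ, ?_⟩
    rintro rfl
    exact h1 hQ
  · rintro ⟨huv, hQ, _⟩
    exact ⟨huv, hQ⟩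

lemma Wset_swap_mem (Q : α → α → Prop) (m : Fin M → α) (t0 t1 : Fin M)
    (h01 : (t0:ℕ) + 1 = (t1:ℕ)) (h2 : Q (m t1) (m t0)) :
    (t0, t1) ∈ Wset Q (m ∘ (Equiv.swap t0 t1)) := by
  have h0 : t0 < t1 := by rw [Fin.lt_def]; omega
  simp only [Wset, mem_filter, mem_univ, true_and, Function.comp_apply]
  refine ⟨h0, ?_⟩
  rwa [Equiv.swap_apply_left, Equiv.swap_apply_right]

lemma Wset_erase_eq (Q : α → α → Prop) (m : Fin M → α) (t0 t1 : Fin M) :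
    (Wset Q m).erase (t0, t1) = WsetEx Q m t0 t1 := by
  ext ij
  simp only [Wset, WsetEx, mem_erase, mem_filter, mem_univ, true_and]
  tauto

lemma Wprod_swap_adj (Q : α → α → Prop) (G : α → α → ℂ) (m : Fin M → α) (t0 t1 : Fin M)
    (h01 : (t0:ℕ) + 1 = (t1:ℕ)) (h1 : ¬ Q (m t0) (m t1)) (h2 : Q (m t1) (m t0)) :
    Wprod Q G (m ∘ (Equiv.swap t0 t1)) = G (m t1) (m t0) * Wprod Q G m := by
  rw [Wprod, ← Finset.mul_prod_erase _ _ (Wset_swap_mem Q m t0 t1 h01 h2)]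
  congr 1
  · simp [Equiv.swap_apply_left, Equiv.swap_apply_right]
  · rw [Wset_erase_eq, WsetEx_image Q m t0 t1 h01,
      Finset.prod_image (fun x _ y _ h => swap_pair_inj t0 t1 h)]
    rw [Wprod, Wset_eq_ex Q m t0 t1 h1]
    apply Finset.prod_congr rfl
    intro ij _
    simp [Equiv.swap_apply_self]

lemma Wcard_swap_adj (Q : α → α → Prop) (m : Fin M → α) (t0 t1 : Fin M)
    (h01 : (t0:ℕ) + 1 = (t1:ℕ)) (h1 : ¬ Q (m t0) (m t1)) (h2 : Q (m t1) (m t0)) :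
    (Wset Q (m ∘ (Equiv.swap t0 t1))).card = (Wset Q m).card + 1 := by
  rw [← Finset.card_erase_add_one (Wset_swap_mem Q m t0 t1 h01 h2)]
  congr 1
  rw [Wset_erase_eq, WsetEx_image Q m t0 t1 h01,
    Finset.card_image_of_injective _ (swap_pair_inj t0 t1),
    Wset_eq_ex Q m t0 t1 h1]

lemma sum_pair_half {R : Type*} [AddCommMonoid R] [Module ℂ R] {M : ℕ}
    (F Gn : Equiv.Perm (Fin M) → R) (s : Equiv.Perm (Fin M)) (hs : s * s = 1)
    (h : ∀ σ, F σ + F (σ * s) = Gn σ + Gn (σ * s)) :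
    ∑ σ : Equiv.Perm (Fin M), F σ = ∑ σ : Equiv.Perm (Fin M), Gn σ := by
  have key : ∀ (H : Equiv.Perm (Fin M) → R),
      ∑ σ : Equiv.Perm (Fin M), H (σ * s) = ∑ σ : Equiv.Perm (Fin M), H σ :=
    fun H => Fintype.sum_equiv (Equiv.mulRight s) _ _ (fun σ => rfl)
  have h2 : (2:ℂ) • (∑ σ : Equiv.Perm (Fin M), F σ)
      = (2:ℂ) • (∑ σ : Equiv.Perm (Fin M), Gn σ) := by
    rw [two_smul, two_smul]
    calc (∑ σ : Equiv.Perm (Fin M), F σ) + ∑ σ : Equiv.Perm (Fin M), F σ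
        = (∑ σ : Equiv.Perm (Fin M), F σ) + ∑ σ : Equiv.Perm (Fin M), F (σ * s) := by
          rw [key]
      _ = ∑ σ : Equiv.Perm (Fin M), (F σ + F (σ * s)) := by rw [← Finset.sum_add_distrib]
      _ = ∑ σ : Equiv.Perm (Fin M), (Gn σ + Gn (σ * s)) := by
          exact Finset.sum_congr rfl (fun σ _ => h σ)
      _ = (∑ σ : Equiv.Perm (Fin M), Gn σ) + ∑ σ : Equiv.Perm (Fin M), Gn (σ * s) := by
          rw [Finset.sum_add_distrib]
      _ = _ := by rw [key]
  have := congrArg (fun x => (2:ℂ)⁻¹ • x) h2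
  simpa [smul_smul] using this

lemma qSign_eq_Wprod {N : ℕ} (X : Fin N → Fin N → ℂ) (σ : Equiv.Perm (Fin N)) :
    qSign X id σ = Wprod (fun x y => y < x) (fun x y => -(X y x)) ⇑σ := by
  unfold qSign Wprod Wset
  apply Finset.prod_congr
  · ext ij
    simp only [Finset.mem_filter]
  · intro ij _
    rfl

end PfAux
namespace PfAux

open Finset

variable {R : Type*} [Ring R] [Algebra ℂ R] {N : ℕ}
variable {lam : ℂ} {p q : Fin N → Fin N → ℂ} {a : Fin N → Fin N → R}

lemma smul_cancel {x y : R} {c : ℂ} (hc : c ≠ 0) (h : c • x = c • y) : x = y := by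
  have := congrArg (fun z : R => c⁻¹ • z) h
  simpa [smul_smul, inv_mul_cancel₀ hc] using this

lemma lam1_ne (hlam : lam ≠ -1) : lam + 1 ≠ 0 := by
  intro h
  exact hlam (eq_neg_of_add_eq_zero_left h)

lemma rel_s1 (hpq : ParamConds p q) (ha : IsQuantumMatrix p q a)
    {i j k l : Fin N} (hij : i < j) (hkl : k < l) :
    (q i j) • (a i k * a j l) - (q k l) • (a j l * a i k)
      = (q i j * q k l) • (a i l * a j k) - a j k * a i l := by
  have h3 := ha.2.2.1 i j k l hij hkl
  have hq : q i j ≠ 0 := (hpq.1 i j).2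
  have e := congrArg (fun x : R => (q i j) • x) h3
  simp only [smul_sub, smul_smul] at e
  rw [show q i j * (q k l / q i j) = q k l by field_simp,
      show q i j * (q i j)⁻¹ = 1 from mul_inv_cancel₀ hq, one_smul] at e
  exact e

lemma rel_s2 (hpq : ParamConds p q) (ha : IsQuantumMatrix p q a)
    {i j k l : Fin N} (hij : i < j) (hkl : k < l) :
    (p k l) • (a i k * a j l) - (p i j) • (a j l * a i k)
      = (p k l * p i j) • (a j k * a i l) - a i l * a j k := by
  have h4 := ha.2.2.2 i j k l hij hkl
  have hp : p k l ≠ 0 := (hpq.1 k l).1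
  have e := congrArg (fun x : R => (p k l) • x) h4
  simp only [smul_sub, smul_smul] at e
  rw [show p k l * (p i j / p k l) = p i j by field_simp,
      show p k l * (p k l)⁻¹ = 1 from mul_inv_cancel₀ hp, one_smul] at e
  exact e

/-- Row-swap relation. -/
lemma relU1 (hpq : ParamConds p q) (ha : IsQuantumMatrix p q a)
    {i j k l : Fin N} (hij : i < j) (hkl : k < l) :
    a j k * a i l - (q k l) • (a j l * a i k)
      = (-(q i j)) • (a i k * a j l - (q k l) • (a i l * a j k)) := by
  have e := rel_s1 hpq ha hij hkl
  linear_combination (norm := module) e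

/-- Column-swap relation. -/
lemma relU2 (hpq : ParamConds p q) (ha : IsQuantumMatrix p q a)
    {i j k l : Fin N} (hij : i < j) (hkl : k < l) :
    a i l * a j k - (p i j) • (a j l * a i k)
      = (-(p k l)) • (a i k * a j l - (p i j) • (a j k * a i l)) := by
  have e := rel_s2 hpq ha hij hkl
  linear_combination (norm := module) e

/-- Antidiagonal commutation, balanced form. -/
lemma rel_h6 (hlam : lam ≠ -1) (hpq : ParamConds p q) (hpl : PLambdaCond p q lam)
    (ha : IsQuantumMatrix p q a)
    {i j k l : Fin N} (hij : i < j) (hkl : k < l) :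
    (q i j) • (a i l * a j k) = (p k l) • (a j k * a i l) := by
  have e1 := rel_s1 hpq ha hij hkl
  have e2 := rel_s2 hpq ha hij hkl
  have hplij := hpl i j hij
  have hplkl := hpl k l hkl
  have t1 : (p i j * q i j) • (a j l * a i k) = lam • (a j l * a i k) := by rw [hplij]
  have t2 : (p k l * q k l) • (a j l * a i k) = lam • (a j l * a i k) := by rw [hplkl]
  have t3 : (p k l * q k l) • (a i l * a j k) = lam • (a i l * a j k) := by rw [hplkl]
  have t4 : (p i j * q i j) • (a j k * a i l) = lam • (a j k * a i l) := by rw [hplij]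
  have key : ((lam + 1) * (q i j)) • (a i l * a j k)
      = ((lam + 1) * (p k l)) • (a j k * a i l) := by
    linear_combination (norm := module)
      (q i j) • e2 - (p k l) • e1 + t1 - t2 - (q i j) • t3 + (p k l) • t4
  have key' : (lam + 1) • ((q i j) • (a i l * a j k))
      = (lam + 1) • ((p k l) • (a j k * a i l)) := by
    rw [smul_smul, smul_smul]; exact key
  exact smul_cancel (lam1_ne hlam) key'

/-- Antidiagonal commutation, inverted form. -/
lemma relU3 (hlam : lam ≠ -1) (hpq : ParamConds p q) (hpl : PLambdaCond p q lam)
    (ha : IsQuantumMatrix p q a)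
    {i j k l : Fin N} (hij : i < j) (hkl : k < l) :
    a i l * a j k = ((q i j)⁻¹ * (p k l)) • (a j k * a i l) := by
  have h6 := rel_h6 hlam hpq hpl ha hij hkl
  have hq : q i j ≠ 0 := (hpq.1 i j).2
  have : (q i j) • (a i l * a j k)
      = (q i j) • (((q i j)⁻¹ * (p k l)) • (a j k * a i l)) := by
    rw [h6, smul_smul, show q i j * ((q i j)⁻¹ * p k l) = p k l by field_simp]
  exact smul_cancel hq this

/-- `q_{kl} a_{il} a_{jk} = p_{ij} a_{jk} a_{il}`. -/
lemma relR5 (hlam : lam ≠ -1) (hpq : ParamConds p q) (hpl : PLambdaCond p q lam)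
    (ha : IsQuantumMatrix p q a)
    {i j k l : Fin N} (hij : i < j) (hkl : k < l) :
    (q k l) • (a i l * a j k) = (p i j) • (a j k * a i l) := by
  have h6 := rel_h6 hlam hpq hpl ha hij hkl
  have hq : q i j ≠ 0 := (hpq.1 i j).2
  have t2 : (p k l * q k l) • (a j k * a i l) = lam • (a j k * a i l) := by rw [hpl k l hkl]
  have t4 : (p i j * q i j) • (a j k * a i l) = lam • (a j k * a i l) := by rw [hpl i j hij]
  have key : (q i j) • ((q k l) • (a i l * a j k))
      = (q i j) • ((p i j) • (a j k * a i l)) := by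
    rw [smul_smul, smul_smul]
    linear_combination (norm := module) (q k l) • h6 + t2 - t4
  exact smul_cancel hq key

end PfAux
namespace PfAux

open Finset

variable {R : Type*} [Ring R] [Algebra ℂ R] {N : ℕ}
variable {lam : ℂ} {p q : Fin N → Fin N → ℂ} {a : Fin N → Fin N → R}

/-- The sign weight of a word. -/
def Ww (p : Fin N → Fin N → ℂ) (m : Fin N → Fin N) : ℂ :=
  Wprod (fun x y : Fin N => y < x) (fun x y => -(p y x)) m

/-- Column determinant with repeated/permuted columns given by the word `m`. -/
def Cw (p : Fin N → Fin N → ℂ) (a : Fin N → Fin N → R) (m : Fin N → Fin N) : R :=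
  ∑ σ : Equiv.Perm (Fin N), Ww p ⇑σ • ordProd (fun t => a (σ t) (m t))

def idw (N : ℕ) : Fin N → Fin N := fun t => t

lemma qSign_eq_Ww (X : Fin N → Fin N → ℂ) (σ : Equiv.Perm (Fin N)) :
    qSign X id σ = Ww X ⇑σ := qSign_eq_Wprod X σ

lemma Cw_idw : Cw p a (idw N) = cdet p a := by
  unfold Cw cdet idw
  apply Finset.sum_congr rfl
  intro σ _
  rw [qSign_eq_Ww]

lemma word_take_eq (m m' : Fin N → Fin N) (σ σ' : Equiv.Perm (Fin N)) (t0 t1 : Fin N)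
    (h01 : (t0:ℕ) + 1 = (t1:ℕ))
    (hagree : ∀ u : Fin N, u ≠ t0 → u ≠ t1 → σ u = σ' u ∧ m u = m' u) :
    ((List.ofFn (fun t => a (σ t) (m t))).take (t0:ℕ)
        = (List.ofFn (fun t => a (σ' t) (m' t))).take (t0:ℕ))
    ∧ ((List.ofFn (fun t => a (σ t) (m t))).drop ((t0:ℕ)+2)
        = (List.ofFn (fun t => a (σ' t) (m' t))).drop ((t0:ℕ)+2)) := by
  constructor
  · apply take_ofFn_eq
    intro u hu
    obtain ⟨h1, h2⟩ := hagree u (fun h => by rw [h] at hu; omega)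
      (fun h => by rw [h] at hu; omega)
    rw [h1, h2]
  · apply drop_ofFn_eq
    intro u hu
    obtain ⟨h1, h2⟩ := hagree u (fun h => by rw [h] at hu; omega)
      (fun h => by rw [h] at hu; omega)
    rw [h1, h2]

lemma swap_ne_left {t0 t1 u : Fin N} (h01 : (t0:ℕ) + 1 = (t1:ℕ)) (hu0 : u ≠ t0) (hu1 : u ≠ t1) :
    Equiv.swap t0 t1 u = u := Equiv.swap_apply_of_ne_of_ne hu0 hu1

/-- Key pairing computation for `CW1`. -/
lemma CW1 (hpq : ParamConds p q) (ha : IsQuantumMatrix p q a)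
    {m : Fin N → Fin N} (t0 t1 : Fin N) (h01 : (t0:ℕ) + 1 = (t1:ℕ))
    (heq : m t0 = m t1) : Cw p a m = 0 := by
  set s := Equiv.swap t0 t1 with hsdef
  have hss : s * s = 1 := Equiv.swap_mul_self t0 t1
  have hne : t0 ≠ t1 := fun h => by rw [h] at h01; omega
  have hkey : ∀ σ : Equiv.Perm (Fin N), σ t0 < σ t1 →
      (Ww p ⇑σ • ordProd (fun t => a (σ t) (m t)))
        + (Ww p ⇑(σ * s) • ordProd (fun t => a ((σ * s) t) (m t))) = 0 := by
    intro σ hσ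
    have hW : Ww p ⇑(σ * s) = (-(p (σ t0) (σ t1))) * Ww p ⇑σ := by
      have hh := Wprod_swap_adj (fun x y : Fin N => y < x) (fun x y => -(p y x)) ⇑σ t0 t1 h01
        (by simpa using lt_asymm hσ) (by simpa using hσ)
      rw [Ww, Equiv.Perm.coe_mul]
      exact hh
    have e1 := ordProd_split (fun t => a (σ t) (m t)) t0 t1 h01
    have e2 := ordProd_split (fun t => a ((σ * s) t) (m t)) t0 t1 h01
    obtain ⟨hT1, hT2⟩ := word_take_eq (a := a) m m (σ * s) σ t0 t1 h01
      (fun u hu0 hu1 => ⟨by rw [Equiv.Perm.mul_apply, hsdef, swap_ne_left h01 hu0 hu1], rfl⟩)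
    have hf0 : a ((σ * s) t0) (m t0) = a (σ t1) (m t0) := by
      rw [Equiv.Perm.mul_apply, hsdef, Equiv.swap_apply_left]
    have hf1 : a ((σ * s) t1) (m t1) = a (σ t0) (m t0) := by
      rw [Equiv.Perm.mul_apply, hsdef, Equiv.swap_apply_right, heq]
    rw [e1, e2, hT1, hT2]
    beta_reduce
    rw [hf0, hf1, hW]
    rw [show m t1 = m t0 from heq.symm]
    have hrel := ha.2.1 (σ t0) (σ t1) (m t0) hσ
    have hrel2 := congrArg (fun z : R =>
      ((List.ofFn (fun t => a (σ t) (m t))).take (t0:ℕ)).prod * z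
        * ((List.ofFn (fun t => a (σ t) (m t))).drop ((t0:ℕ)+2)).prod) hrel
    simp only [mul_smul_comm, smul_mul_assoc] at hrel2
    linear_combination (norm := module) (Ww p ⇑σ) • hrel2
  have hsum := sum_pair_half (R := R)
      (fun σ => Ww p ⇑σ • ordProd (fun t => a (σ t) (m t))) (fun _ => 0) s hss ?_
  · rw [Cw, hsum, Finset.sum_const_zero]
  · intro σ
    have hneσ : σ t0 ≠ σ t1 := fun h => hne (σ.injective h)
    rcases lt_or_gt_of_ne hneσ with h | h
    · rw [hkey σ h, add_zero]
    · have h2 := hkey (σ * s) (by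
        rw [Equiv.Perm.mul_apply, Equiv.Perm.mul_apply, hsdef,
          Equiv.swap_apply_left, Equiv.swap_apply_right]
        exact h)
      have hss2 : σ * s * s = σ := by rw [mul_assoc, hss, mul_one]
      rw [hss2] at h2
      rw [add_comm] at h2
      rw [h2, add_zero]

/-- Key pairing computation for `CW2`. -/
lemma CW2 (hpq : ParamConds p q) (ha : IsQuantumMatrix p q a)
    {m : Fin N → Fin N} (t0 t1 : Fin N) (h01 : (t0:ℕ) + 1 = (t1:ℕ))
    (hlt : m t1 < m t0) :
    Cw p a m = (-(p (m t1) (m t0))) • Cw p a (m ∘ (Equiv.swap t0 t1)) := by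
  set s := Equiv.swap t0 t1 with hsdef
  have hss : s * s = 1 := Equiv.swap_mul_self t0 t1
  have hne : t0 ≠ t1 := fun h => by rw [h] at h01; omega
  have hms0 : (m ∘ s) t0 = m t1 := by
    simp only [Function.comp_apply, hsdef, Equiv.swap_apply_left]
  have hms1 : (m ∘ s) t1 = m t0 := by
    simp only [Function.comp_apply, hsdef, Equiv.swap_apply_right]
  have hkey : ∀ σ : Equiv.Perm (Fin N), σ t0 < σ t1 →
      (Ww p ⇑σ • ordProd (fun t => a (σ t) (m t)))
        + (Ww p ⇑(σ * s) • ordProd (fun t => a ((σ * s) t) (m t)))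
      = ((-(p (m t1) (m t0))) • (Ww p ⇑σ • ordProd (fun t => a (σ t) ((m ∘ s) t))))
        + ((-(p (m t1) (m t0))) • (Ww p ⇑(σ * s)
            • ordProd (fun t => a ((σ * s) t) ((m ∘ s) t)))) := by
    intro σ hσ
    have hW : Ww p ⇑(σ * s) = (-(p (σ t0) (σ t1))) * Ww p ⇑σ := by
      have hh := Wprod_swap_adj (fun x y : Fin N => y < x) (fun x y => -(p y x)) ⇑σ t0 t1 h01
        (by simpa using lt_asymm hσ) (by simpa using hσ)
      rw [Ww, Equiv.Perm.coe_mul]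
      exact hh
    have e1 := ordProd_split (fun t => a (σ t) (m t)) t0 t1 h01
    have e2 := ordProd_split (fun t => a ((σ * s) t) (m t)) t0 t1 h01
    have e3 := ordProd_split (fun t => a (σ t) ((m ∘ s) t)) t0 t1 h01
    have e4 := ordProd_split (fun t => a ((σ * s) t) ((m ∘ s) t)) t0 t1 h01
    have hagree : ∀ u : Fin N, u ≠ t0 → u ≠ t1 → (σ * s) u = σ u ∧ (m ∘ s) u = m u :=
      fun u hu0 hu1 => ⟨by rw [Equiv.Perm.mul_apply, hsdef, swap_ne_left h01 hu0 hu1],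
        by simp only [Function.comp_apply, hsdef, swap_ne_left h01 hu0 hu1]⟩
    obtain ⟨hT2a, hT2b⟩ := word_take_eq (a := a) m m (σ * s) σ t0 t1 h01
      (fun u hu0 hu1 => ⟨(hagree u hu0 hu1).1, rfl⟩)
    obtain ⟨hT3a, hT3b⟩ := word_take_eq (a := a) (m ∘ s) m σ σ t0 t1 h01
      (fun u hu0 hu1 => ⟨rfl, (hagree u hu0 hu1).2⟩)
    obtain ⟨hT4a, hT4b⟩ := word_take_eq (a := a) (m ∘ s) m (σ * s) σ t0 t1 h01
      (fun u hu0 hu1 => ⟨(hagree u hu0 hu1).1, (hagree u hu0 hu1).2⟩)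
    have hf2a : a ((σ * s) t0) (m t0) = a (σ t1) (m t0) := by
      rw [Equiv.Perm.mul_apply, hsdef, Equiv.swap_apply_left]
    have hf2b : a ((σ * s) t1) (m t1) = a (σ t0) (m t1) := by
      rw [Equiv.Perm.mul_apply, hsdef, Equiv.swap_apply_right]
    have hf4a : a ((σ * s) t0) ((m ∘ s) t0) = a (σ t1) (m t1) := by
      rw [Equiv.Perm.mul_apply, hsdef, Equiv.swap_apply_left, hms0]
    have hf4b : a ((σ * s) t1) ((m ∘ s) t1) = a (σ t0) (m t0) := by
      rw [Equiv.Perm.mul_apply, hsdef, Equiv.swap_apply_right, hms1]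
    rw [e1, e2, e3, e4, hT2a, hT2b, hT3a, hT3b, hT4a, hT4b]
    beta_reduce
    rw [hf2a, hf2b, hf4a, hf4b, hms0, hms1, hW]
    have hrel := relU2 hpq ha hσ hlt
    have hrel2 := congrArg (fun z : R =>
      ((List.ofFn (fun t => a (σ t) (m t))).take (t0:ℕ)).prod * z
        * ((List.ofFn (fun t => a (σ t) (m t))).drop ((t0:ℕ)+2)).prod) hrel
    simp only [mul_sub, sub_mul, mul_smul_comm, smul_mul_assoc] at hrel2
    linear_combination (norm := module) (Ww p ⇑σ) • hrel2
  have hsum := sum_pair_half (R := R)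
      (fun σ => Ww p ⇑σ • ordProd (fun t => a (σ t) (m t)))
      (fun σ => (-(p (m t1) (m t0))) • (Ww p ⇑σ • ordProd (fun t => a (σ t) ((m ∘ s) t))))
      s hss ?_
  · rw [Cw, hsum, ← Finset.smul_sum]
    rfl
  · intro σ
    have hneσ : σ t0 ≠ σ t1 := fun h => hne (σ.injective h)
    rcases lt_or_gt_of_ne hneσ with h | h
    · exact hkey σ h
    · have h2 := hkey (σ * s) (by
        rw [Equiv.Perm.mul_apply, Equiv.Perm.mul_apply, hsdef,
          Equiv.swap_apply_left, Equiv.swap_apply_right]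
        exact h)
      have hss2 : σ * s * s = σ := by rw [mul_assoc, hss, mul_one]
      rw [hss2] at h2
      rw [add_comm, h2, add_comm]

lemma le_apply_of_strictMono {f : Fin N → Fin N} (hf : StrictMono f) :
    ∀ t : Fin N, (t:ℕ) ≤ (f t : ℕ) := by
  have key : ∀ k : ℕ, ∀ t : Fin N, (t:ℕ) ≤ k → (t:ℕ) ≤ (f t : ℕ) := by
    intro k
    induction k with
    | zero => intro t ht; omega
    | succ k ih =>
      intro t ht
      rcases Nat.lt_or_ge (t:ℕ) (k+1) with h | h
      · exact ih t (by omega)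
      · have hkN : k < N := by have := t.isLt; omega
        have hlt : (⟨k, by omega⟩ : Fin N) < t := by rw [Fin.lt_def]; simp; omega
        have h1 := hf hlt
        have h2 := ih ⟨k, by omega⟩ (by simp)
        rw [Fin.lt_def] at h1
        simp at h2
        omega
  exact fun t => key (t:ℕ) t le_rfl

lemma strictMono_eq_id {m : Fin N → Fin N} (hm : StrictMono m) : ∀ t, m t = t := by
  have hbij : Function.Bijective m := (Finite.injective_iff_bijective).mp hm.injective
  set e := Equiv.ofBijective m hbij with he
  have hesymm : StrictMono (fun u => e.symm u) := by
    intro u v huv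
    rcases lt_trichotomy (e.symm u) (e.symm v) with h | h | h
    · exact h
    · exfalso
      have : u = v := by
        have := congrArg e h
        simpa [Equiv.apply_symm_apply] using this
      rw [this] at huv
      exact lt_irrefl _ huv
    · exfalso
      have := hm h
      have he2 : ∀ x, m (e.symm x) = x := fun x => e.apply_symm_apply x
      rw [he2, he2] at this
      exact lt_asymm huv this
  intro t
  have h1 := le_apply_of_strictMono hm t
  have h2 := le_apply_of_strictMono hesymm (m t)
  have h3 : e.symm (m t) = t := e.symm_apply_apply t
  rw [h3] at h2
  exact Fin.ext (le_antisymm h2 h1)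

lemma strictMono_of_adj {m : Fin N → Fin N}
    (h : ∀ t0 t1 : Fin N, (t0:ℕ) + 1 = (t1:ℕ) → m t0 < m t1) : StrictMono m := by
  have key : ∀ d : ℕ, ∀ u v : Fin N, (v:ℕ) = (u:ℕ) + d + 1 → m u < m v := by
    intro d
    induction d with
    | zero => intro u v hv; exact h u v (by omega)
    | succ d ih =>
      intro u v hv
      have hw : ((v:ℕ) - 1) < N := by have := v.isLt; omega
      have h1 : m ⟨(v:ℕ)-1, hw⟩ < m v := h _ v (by simp; omega)
      have h2 : m u < m ⟨(v:ℕ)-1, hw⟩ := ih u _ (by simp; omega)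
      exact h2.trans h1
  intro u v huv
  have huv' := huv
  rw [Fin.lt_def] at huv'
  exact key ((v:ℕ) - (u:ℕ) - 1) u v (by omega)

lemma Ww_idw : Ww p (idw N) = 1 := by
  rw [Ww, Wprod]
  have h0 : Wset (fun x y : Fin N => y < x) (idw N) = ∅ := by
    apply Finset.eq_empty_of_forall_notMem
    intro ij hij
    rw [mem_Wset] at hij
    obtain ⟨h1, h2⟩ := hij
    exact absurd (h2.trans h1) (lt_irrefl _)
  rw [h0, Finset.prod_empty]

/-- The column straightening lemma. -/
theorem CW (hpq : ParamConds p q) (ha : IsQuantumMatrix p q a) (m : Fin N → Fin N) :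
    Cw p a m = if Function.Injective m then Ww p m • cdet p a else 0 := by
  suffices H : ∀ (K : ℕ) (m : Fin N → Fin N),
      (Wset (fun x y : Fin N => y ≤ x) m).card = K →
      Cw p a m = if Function.Injective m then Ww p m • cdet p a else 0 from
    H _ m rfl
  intro K
  induction K using Nat.strong_induction_on with
  | _ K ih =>
    intro m hK
    by_cases hadj : ∃ t0 t1 : Fin N, ((t0:ℕ) + 1 = (t1:ℕ)) ∧ m t1 ≤ m t0
    · obtain ⟨t0, t1, h01, hle⟩ := hadj
      have hne : t0 ≠ t1 := fun h => by rw [h] at h01; omega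
      rcases eq_or_lt_of_le hle with heq | hlt
      · rw [CW1 hpq ha t0 t1 h01 heq.symm, if_neg]
        intro hinj
        exact hne (hinj heq).symm
      · set s := Equiv.swap t0 t1 with hsdef
        have hss_fun : (m ∘ s) ∘ s = m := by
          funext t
          simp [hsdef, Equiv.swap_apply_self]
        have hcard : (Wset (fun x y : Fin N => y ≤ x) m).card
            = (Wset (fun x y : Fin N => y ≤ x) (m ∘ s)).card + 1 := by
          have hh := Wcard_swap_adj (fun x y : Fin N => y ≤ x) (m ∘ s) t0 t1 h01
            (by
              simp only [Function.comp_apply, hsdef, Equiv.swap_apply_left,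
                Equiv.swap_apply_right]
              exact not_le.mpr hlt)
            (by
              simp only [Function.comp_apply, hsdef, Equiv.swap_apply_left,
                Equiv.swap_apply_right]
              exact hlt.le)
          rwa [hss_fun] at hh
        have ihres := ih ((Wset (fun x y : Fin N => y ≤ x) (m ∘ s)).card)
          (by omega) (m ∘ s) rfl
        rw [CW2 hpq ha t0 t1 h01 hlt, ihres]
        by_cases hinj : Function.Injective m
        · have hinj' : Function.Injective (m ∘ s) := hinj.comp (Equiv.injective s)
          rw [if_pos hinj', if_pos hinj, smul_smul]
          congr 1
          have hh := Wprod_swap_adj (fun x y : Fin N => y < x) (fun x y => -(p y x))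
            (m ∘ s) t0 t1 h01
            (by
              simp only [Function.comp_apply, hsdef, Equiv.swap_apply_left,
                Equiv.swap_apply_right]
              exact lt_asymm hlt)
            (by
              simp only [Function.comp_apply, hsdef, Equiv.swap_apply_left,
                Equiv.swap_apply_right]
              exact hlt)
          rw [hss_fun] at hh
          simp only [Function.comp_apply, hsdef, Equiv.swap_apply_left,
            Equiv.swap_apply_right] at hh
          rw [show Ww p m = Wprod (fun x y : Fin N => y < x) (fun x y => -(p y x)) m from rfl,
            hh]
          rfl
        · have hninj' : ¬ Function.Injective (m ∘ s) := fun hinj' => hinj (by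
            have h2 := hinj'.comp (Equiv.injective s)
            rwa [show (m ∘ ⇑s) ∘ ⇑s = m from hss_fun] at h2)
          rw [if_neg hinj, if_neg hninj', smul_zero]
    · have hmono : StrictMono m := strictMono_of_adj (fun t0 t1 h01 => by
        by_contra hc
        push_neg at hc
        exact hadj ⟨t0, t1, h01, hc⟩)
      have hid : m = idw N := funext (strictMono_eq_id hmono)
      rw [hid, if_pos (show Function.Injective (idw N) from fun x y h => h),
        Ww_idw, one_smul, Cw_idw]

end PfAux
namespace PfAux

open Finset

variable {R : Type*} [Ring R] [Algebra ℂ R] {N : ℕ}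
variable {lam : ℂ} {p q : Fin N → Fin N → ℂ} {a : Fin N → Fin N → R}

def Kq (q p : Fin N → Fin N → ℂ) (τ ρ : Equiv.Perm (Fin N)) : ℂ :=
  Wprod (fun x y : Fin N => τ y < τ x) (fun x y => (q x y)⁻¹ * p (τ y) (τ x)) ⇑ρ

def ValidOrd (τ ρ : Equiv.Perm (Fin N)) : Prop :=
  ∀ u v : Fin N, u < v → ρ v < ρ u → τ (ρ u) < τ (ρ v)

lemma valid_swap (τ ρ : Equiv.Perm (Fin N)) (t0 t1 : Fin N) (h01 : (t0:ℕ) + 1 = (t1:ℕ))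
    (hdesc : τ (ρ t1) < τ (ρ t0)) (hV : ValidOrd τ ρ) :
    ValidOrd τ (ρ * Equiv.swap t0 t1) := by
  intro u v huv hlt
  simp only [Equiv.Perm.mul_apply] at hlt ⊢
  by_cases hp : (u, v) = (t0, t1)
  · have hu : u = t0 := congrArg Prod.fst hp
    have hv : v = t1 := congrArg Prod.snd hp
    subst hu; subst hv
    rw [Equiv.swap_apply_left, Equiv.swap_apply_right]
    exact hdesc
  · have hsuv : Equiv.swap t0 t1 u < Equiv.swap t0 t1 v := swap_lt h01 huv hp
    exact hV _ _ hsuv hlt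

lemma sort_key (hlam : lam ≠ -1) (hpq : ParamConds p q) (hpl : PLambdaCond p q lam)
    (ha : IsQuantumMatrix p q a) (τ : Equiv.Perm (Fin N)) :
    ∀ (K : ℕ) (ρ : Equiv.Perm (Fin N)),
      (Wset (fun x y : Fin N => τ y < τ x) ⇑ρ).card = K → ValidOrd τ ρ →
      ordProd (fun t => a (ρ t) (τ (ρ t))) = Kq q p τ ρ • ordProd (fun t => a (τ⁻¹ t) t) := by
  intro K
  induction K using Nat.strong_induction_on with
  | _ K ih =>
    intro ρ hK hV
    by_cases hadj : ∃ t0 t1 : Fin N, ((t0:ℕ) + 1 = (t1:ℕ)) ∧ τ (ρ t1) < τ (ρ t0)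
    · obtain ⟨t0, t1, h01, hdesc⟩ := hadj
      have hne : t0 ≠ t1 := fun h => by rw [h] at h01; omega
      set s := Equiv.swap t0 t1 with hsdef
      have hrow : ρ t0 < ρ t1 := by
        rcases lt_trichotomy (ρ t0) (ρ t1) with h | h | h
        · exact h
        · exact absurd (ρ.injective h) hne
        · have ht01 : t0 < t1 := by rw [Fin.lt_def]; omega
          exact absurd (hV t0 t1 ht01 h) (lt_asymm hdesc)
      have hcoe : (fun t => a (ρ t) (τ (ρ t))) ∘ ⇑s
          = (fun t => a ((ρ * s) t) (τ ((ρ * s) t))) := by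
        funext t
        simp [Equiv.Perm.mul_apply]
      have hswap := ordProd_swap_adj (fun t => a (ρ t) (τ (ρ t))) t0 t1 h01
        ((q (ρ t0) (ρ t1))⁻¹ * p (τ (ρ t1)) (τ (ρ t0)))
        (relU3 hlam hpq hpl ha hrow hdesc)
      rw [hcoe] at hswap
      have hcoe2 : ⇑(ρ * s) ∘ ⇑s = ⇑ρ := by
        funext t
        simp [Equiv.Perm.mul_apply, hsdef, Equiv.swap_apply_self]
      have hcard : (Wset (fun x y : Fin N => τ y < τ x) ⇑ρ).card
          = (Wset (fun x y : Fin N => τ y < τ x) ⇑(ρ * s)).card + 1 := by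
        have hh := Wcard_swap_adj (fun x y : Fin N => τ y < τ x) ⇑(ρ * s) t0 t1 h01
          (by
            simp only [Equiv.Perm.mul_apply, hsdef, Equiv.swap_apply_left,
              Equiv.swap_apply_right]
            exact lt_asymm hdesc)
          (by
            simp only [Equiv.Perm.mul_apply, hsdef, Equiv.swap_apply_left,
              Equiv.swap_apply_right]
            exact hdesc)
        rwa [hcoe2] at hh
      have hV' : ValidOrd τ (ρ * s) := valid_swap τ ρ t0 t1 h01 hdesc hV
      have ihres := ih ((Wset (fun x y : Fin N => τ y < τ x) ⇑(ρ * s)).card)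
        (by omega) (ρ * s) rfl hV'
      rw [hswap, ihres, smul_smul]
      congr 1
      have hh := Wprod_swap_adj (fun x y : Fin N => τ y < τ x)
        (fun x y => (q x y)⁻¹ * p (τ y) (τ x)) ⇑(ρ * s) t0 t1 h01
        (by
          simp only [Equiv.Perm.mul_apply, hsdef, Equiv.swap_apply_left,
            Equiv.swap_apply_right]
          exact lt_asymm hdesc)
        (by
          simp only [Equiv.Perm.mul_apply, hsdef, Equiv.swap_apply_left,
            Equiv.swap_apply_right]
          exact hdesc)
      rw [hcoe2] at hh
      rw [Kq, Kq, hh]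
      simp only [Equiv.Perm.mul_apply, hsdef, Equiv.swap_apply_left, Equiv.swap_apply_right]
    · push_neg at hadj
      have hmono : StrictMono (fun t => τ (ρ t)) := strictMono_of_adj (fun t0 t1 h01 => by
        have h := hadj t0 t1 h01
        have hne' : τ (ρ t0) ≠ τ (ρ t1) := by
          intro hh
          have := τ.injective hh
          have := ρ.injective this
          rw [this] at h01
          omega
        rcases lt_or_gt_of_ne hne' with hgood | hbad
        · exact hgood
        · exact absurd hbad (not_lt.mpr h))
      have hid := strictMono_eq_id hmono
      have hρ : ∀ t, ρ t = τ⁻¹ t := by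
        intro t
        have := hid t
        have := congrArg (⇑τ⁻¹) this
        rwa [Equiv.Perm.coe_inv, Equiv.symm_apply_apply] at this
      have hKq : Kq q p τ ρ = 1 := by
        rw [Kq, Wprod]
        have h0 : Wset (fun x y : Fin N => τ y < τ x) ⇑ρ = ∅ := by
          apply Finset.eq_empty_of_forall_notMem
          intro ij hij
          rw [mem_Wset] at hij
          obtain ⟨h1, h2⟩ := hij
          rw [hid, hid] at h2
          exact absurd (h2.trans h1) (lt_irrefl _)
        rw [h0, Finset.prod_empty]
      rw [hKq, one_smul]
      apply ordProd_congr
      intro t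
      rw [hρ]
      rw [Equiv.Perm.coe_inv, Equiv.apply_symm_apply]

lemma sort_monomial (hlam : lam ≠ -1) (hpq : ParamConds p q) (hpl : PLambdaCond p q lam)
    (ha : IsQuantumMatrix p q a) (τ : Equiv.Perm (Fin N)) :
    qSign q id τ • ordProd (fun t => a t (τ t))
      = qSign p id τ⁻¹ • ordProd (fun t => a (τ⁻¹ t) t) := by
  have hV1 : ValidOrd τ 1 := by
    intro u v huv hlt
    simp only [Equiv.Perm.one_apply] at hlt
    exact absurd (huv.trans hlt) (lt_irrefl _)
  have h1 := sort_key hlam hpq hpl ha τ _ 1 rfl hV1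
  simp only [Equiv.Perm.one_apply] at h1
  rw [h1, smul_smul]
  congr 1
  -- ⊢ qSign q id τ * Kq q p τ 1 = qSign p id τ⁻¹
  have hset : Wset (fun x y : Fin N => y < x) ⇑τ
      = Wset (fun x y : Fin N => τ y < τ x) ⇑(1 : Equiv.Perm (Fin N)) := by
    ext ij
    rw [mem_Wset, mem_Wset]
    simp [Equiv.Perm.one_apply]
  rw [qSign_eq_Ww, Ww, Wprod, Kq, Wprod, hset, ← Finset.prod_mul_distrib]
  simp only [Equiv.Perm.one_apply]
  have hstep : ∀ ij ∈ Wset (fun x y : Fin N => τ y < τ x) ⇑(1 : Equiv.Perm (Fin N)),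
      -(q (τ ij.2) (τ ij.1)) * ((q ij.1 ij.2)⁻¹ * p (τ ij.2) (τ ij.1))
      = -(p ij.1 ij.2) := by
    intro ij hij
    rw [mem_Wset] at hij
    obtain ⟨h1, h2⟩ := hij
    simp only [Equiv.Perm.one_apply] at h2
    have e1 : q (τ ij.2) (τ ij.1) * p (τ ij.2) (τ ij.1) = lam := by
      rw [mul_comm]; exact hpl _ _ h2
    have e2 : p ij.1 ij.2 * q ij.1 ij.2 = lam := hpl _ _ h1
    have hqne : q ij.1 ij.2 ≠ 0 := (hpq.1 _ _).2
    field_simp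
    linear_combination e2 - e1
  rw [Finset.prod_congr rfl hstep]
  -- ⊢ ∏ ij ∈ S, -(p ij.1 ij.2) = qSign p id τ⁻¹
  rw [qSign_eq_Ww, Ww, Wprod]
  apply Finset.prod_nbij' (fun ij => (τ ij.2, τ ij.1)) (fun ij => (τ⁻¹ ij.2, τ⁻¹ ij.1))
  · intro ij hij
    rw [mem_Wset] at hij ⊢
    obtain ⟨h1, h2⟩ := hij
    simp only [Equiv.Perm.one_apply] at h2
    refine ⟨h2, ?_⟩
    simp only [Equiv.Perm.coe_inv, Equiv.symm_apply_apply]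
    exact h1
  · intro ij hij
    rw [mem_Wset] at hij ⊢
    obtain ⟨h1, h2⟩ := hij
    refine ⟨h2, ?_⟩
    simp only [Equiv.Perm.one_apply, Equiv.Perm.coe_inv, Equiv.apply_symm_apply]
    exact h1
  · intro ij _
    simp [Equiv.Perm.coe_inv, Equiv.symm_apply_apply]
  · intro ij _
    simp [Equiv.Perm.coe_inv, Equiv.apply_symm_apply]
  · intro ij _
    simp only [Equiv.Perm.coe_inv, Equiv.symm_apply_apply]

theorem cdet_eq_rdet (hlam : lam ≠ -1) (hpq : ParamConds p q) (hpl : PLambdaCond p q lam)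
    (ha : IsQuantumMatrix p q a) : cdet p a = rdet q a := by
  rw [rdet]
  have hstep : ∀ τ : Equiv.Perm (Fin N),
      qSign q id τ • ordProd (fun i => a i (τ i))
        = qSign p id τ⁻¹ • ordProd (fun t => a (τ⁻¹ t) t) :=
    fun τ => sort_monomial hlam hpq hpl ha τ
  rw [Finset.sum_congr rfl (fun τ _ => hstep τ)]
  rw [cdet]
  exact Fintype.sum_equiv (Equiv.inv (Equiv.Perm (Fin N)))
    (fun σ => qSign p id σ • ordProd (fun t => a (σ t) t))
    (fun τ => qSign p id τ⁻¹ • ordProd (fun t => a (τ⁻¹ t) t))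
    (fun σ => rfl)

end PfAux
namespace PfAux

open Finset

variable {R : Type*} [Ring R] [Algebra ℂ R] {n : ℕ}
variable {lam : ℂ} {p q : Fin (2*n) → Fin (2*n) → ℂ} {a : Fin (2*n) → Fin (2*n) → R}

lemma pfIdx1_val (i : Fin n) : ((pfIdx1 i : Fin (2*n)) : ℕ) = 2 * i.1 := rfl
lemma pfIdx2_val (i : Fin n) : ((pfIdx2 i : Fin (2*n)) : ℕ) = 2 * i.1 + 1 := rfl
lemma pfIdx_adj (i : Fin n) : ((pfIdx1 i : Fin (2*n)) : ℕ) + 1 = ((pfIdx2 i : Fin (2*n)) : ℕ) := rfl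

def blkSwap (i : Fin n) : Equiv.Perm (Fin (2*n)) :=
  Equiv.swap (pfIdx1 i) (pfIdx2 i)

lemma blk_ne {i j : Fin n} (hij : i ≠ j) :
    pfIdx1 i ≠ pfIdx1 j ∧ pfIdx1 i ≠ pfIdx2 j ∧ pfIdx2 i ≠ pfIdx1 j ∧ pfIdx2 i ≠ pfIdx2 j := by
  have hv : i.1 ≠ j.1 := fun h => hij (Fin.ext h)
  refine ⟨?_, ?_, ?_, ?_⟩ <;>
    (intro h; have := congrArg Fin.val h; simp only [pfIdx1_val, pfIdx2_val] at this; omega)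

lemma blkSwap_commute {i j : Fin n} (hij : i ≠ j) : Commute (blkSwap i) (blkSwap j) := by
  apply Equiv.Perm.Disjoint.commute
  intro x
  by_cases hx : x = pfIdx1 i ∨ x = pfIdx2 i
  · right
    obtain ⟨h1, h2, h3, h4⟩ := blk_ne hij
    rcases hx with rfl | rfl
    · exact Equiv.swap_apply_of_ne_of_ne h1 h2
    · exact Equiv.swap_apply_of_ne_of_ne h3 h4
  · push_neg at hx
    left
    exact Equiv.swap_apply_of_ne_of_ne hx.1 hx.2

def tauE (E : Finset (Fin n)) : Equiv.Perm (Fin (2*n)) :=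
  E.noncommProd (fun i => blkSwap i)
    (fun _ _ _ _ hij => blkSwap_commute hij)

lemma tauE_empty : tauE (∅ : Finset (Fin n)) = 1 := Finset.noncommProd_empty _ _

lemma tauE_insert {j : Fin n} {E : Finset (Fin n)} (hj : j ∉ E) :
    tauE (insert j E) = blkSwap j * tauE E :=
  Finset.noncommProd_insert_of_notMem _ _ _ _ hj

lemma tauE_commute (E : Finset (Fin n)) (j : Fin n) (hj : j ∉ E) :
    Commute (blkSwap j) (tauE E) := by
  apply Finset.noncommProd_commute
  intro x hx
  exact blkSwap_commute (fun h => hj (h ▸ hx))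

lemma tauE_p1 (E : Finset (Fin n)) (i : Fin n) :
    tauE E (pfIdx1 i) = if i ∈ E then pfIdx2 i else pfIdx1 i := by
  induction E using Finset.induction_on with
  | empty => simp [tauE_empty]
  | @insert j E hj ih =>
    rw [tauE_insert hj, Equiv.Perm.mul_apply, ih]
    by_cases hiE : i ∈ E
    · have hij : i ≠ j := fun h => hj (h ▸ hiE)
      rw [if_pos hiE, if_pos (Finset.mem_insert_of_mem hiE)]
      obtain ⟨h1, h2, h3, h4⟩ := blk_ne hij
      exact Equiv.swap_apply_of_ne_of_ne h3 h4
    · rw [if_neg hiE]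
      by_cases hijeq : i = j
      · subst hijeq
        rw [if_pos (Finset.mem_insert_self i E)]
        exact Equiv.swap_apply_left _ _
      · rw [if_neg (by simp [hijeq, hiE])]
        obtain ⟨h1, h2, _, _⟩ := blk_ne hijeq
        exact Equiv.swap_apply_of_ne_of_ne h1 h2

lemma tauE_p2 (E : Finset (Fin n)) (i : Fin n) :
    tauE E (pfIdx2 i) = if i ∈ E then pfIdx1 i else pfIdx2 i := by
  induction E using Finset.induction_on with
  | empty => simp [tauE_empty]
  | @insert j E hj ih =>
    rw [tauE_insert hj, Equiv.Perm.mul_apply, ih]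
    by_cases hiE : i ∈ E
    · have hij : i ≠ j := fun h => hj (h ▸ hiE)
      rw [if_pos hiE, if_pos (Finset.mem_insert_of_mem hiE)]
      obtain ⟨h1, h2, _, _⟩ := blk_ne hij
      exact Equiv.swap_apply_of_ne_of_ne h1 h2
    · rw [if_neg hiE]
      by_cases hijeq : i = j
      · subst hijeq
        rw [if_pos (Finset.mem_insert_self i E)]
        exact Equiv.swap_apply_right _ _
      · rw [if_neg (by simp [hijeq, hiE])]
        obtain ⟨_, _, h3, h4⟩ := blk_ne hijeq
        exact Equiv.swap_apply_of_ne_of_ne h3 h4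

lemma tauE_sq (E : Finset (Fin n)) : tauE E * tauE E = 1 := by
  induction E using Finset.induction_on with
  | empty => rw [tauE_empty, one_mul]
  | @insert j E hj ih =>
    rw [tauE_insert hj]
    have hc := tauE_commute E j hj
    calc blkSwap j * tauE E * (blkSwap j * tauE E)
        = blkSwap j * (tauE E * blkSwap j) * tauE E := by
          rw [mul_assoc, mul_assoc, mul_assoc]
      _ = blkSwap j * (blkSwap j * tauE E) * tauE E := by rw [hc.eq]
      _ = (blkSwap j * blkSwap j) * (tauE E * tauE E) := by
          rw [mul_assoc, mul_assoc, mul_assoc]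
      _ = 1 := by
        rw [ih, show blkSwap j * blkSwap j = 1 from Equiv.swap_mul_self _ _]
        rw [mul_one]

end PfAux
namespace PfAux

open Finset

variable {R : Type*} [Ring R] [Algebra ℂ R] {n : ℕ}
variable {lam : ℂ} {p q : Fin (2*n) → Fin (2*n) → ℂ} {a : Fin (2*n) → Fin (2*n) → R}

lemma mulTauE_p1 (σ : Equiv.Perm (Fin (2*n))) (E : Finset (Fin n)) (i : Fin n) :
    (σ * tauE E) (pfIdx1 i) = if i ∈ E then σ (pfIdx2 i) else σ (pfIdx1 i) := by
  rw [Equiv.Perm.mul_apply, tauE_p1]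
  split_ifs <;> rfl

lemma mulTauE_p2 (σ : Equiv.Perm (Fin (2*n))) (E : Finset (Fin n)) (i : Fin n) :
    (σ * tauE E) (pfIdx2 i) = if i ∈ E then σ (pfIdx1 i) else σ (pfIdx2 i) := by
  rw [Equiv.Perm.mul_apply, tauE_p2]
  split_ifs <;> rfl

lemma Ww_tauE (σ : Equiv.Perm (Fin (2*n))) (hadm : ∀ i : Fin n, σ (pfIdx1 i) < σ (pfIdx2 i))
    (E : Finset (Fin n)) :
    Ww p ⇑(σ * tauE E)
      = (∏ i ∈ E, -(p (σ (pfIdx1 i)) (σ (pfIdx2 i)))) * Ww p ⇑σ := by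
  induction E using Finset.induction_on with
  | empty => rw [tauE_empty, mul_one, Finset.prod_empty, one_mul]
  | @insert j E hj ih =>
    have hmul : σ * tauE (insert j E) = (σ * tauE E) * blkSwap j := by
      rw [tauE_insert hj, (tauE_commute E j hj).eq, ← mul_assoc]
    rw [hmul]
    have hm1 : (σ * tauE E) (pfIdx1 j) = σ (pfIdx1 j) := by
      rw [Equiv.Perm.mul_apply, tauE_p1, if_neg hj]
    have hm2 : (σ * tauE E) (pfIdx2 j) = σ (pfIdx2 j) := by
      rw [Equiv.Perm.mul_apply, tauE_p2, if_neg hj]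
    have hh := Wprod_swap_adj (fun x y : Fin (2*n) => y < x) (fun x y => -(p y x))
      ⇑(σ * tauE E) (pfIdx1 j) (pfIdx2 j) (pfIdx_adj j)
      (by rw [hm1, hm2]; exact lt_asymm (hadm j))
      (by rw [hm1, hm2]; exact hadm j)
    beta_reduce at hh
    rw [hm1, hm2] at hh
    calc Ww p ⇑((σ * tauE E) * blkSwap j)
        = Wprod (fun x y : Fin (2*n) => y < x) (fun x y => -(p y x))
            (⇑(σ * tauE E) ∘ ⇑(Equiv.swap (pfIdx1 j) (pfIdx2 j))) := by
          rw [Ww, blkSwap, Equiv.Perm.coe_mul]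
      _ = -(p (σ (pfIdx1 j)) (σ (pfIdx2 j))) * Ww p ⇑(σ * tauE E) := hh
      _ = -(p (σ (pfIdx1 j)) (σ (pfIdx2 j)))
            * ((∏ i ∈ E, -(p (σ (pfIdx1 i)) (σ (pfIdx2 i)))) * Ww p ⇑σ) := by rw [ih]
      _ = _ := by rw [Finset.prod_insert hj]; ring

lemma sum_over_perms {β : Type*} [AddCommMonoid β] (f : Equiv.Perm (Fin (2*n)) → β) :
    ∑ σ' : Equiv.Perm (Fin (2*n)), f σ'
      = ∑ σ ∈ Finset.univ.filter
          (fun σ : Equiv.Perm (Fin (2*n)) => ∀ i : Fin n, σ (pfIdx1 i) < σ (pfIdx2 i)),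
          ∑ E : Finset (Fin n), f (σ * tauE E) := by
  have hne12 : ∀ (σ' : Equiv.Perm (Fin (2*n))) (i : Fin n), σ' (pfIdx1 i) ≠ σ' (pfIdx2 i) := by
    intro σ' i h
    have := σ'.injective h
    have := congrArg Fin.val this
    simp only [pfIdx1_val, pfIdx2_val] at this
    omega
  rw [← Finset.sum_product']
  symm
  apply Finset.sum_nbij' (i := fun σE : Equiv.Perm (Fin (2*n)) × Finset (Fin n) =>
      σE.1 * tauE σE.2)
    (j := fun σ' => (σ' * tauE (Finset.univ.filter
        (fun i : Fin n => σ' (pfIdx2 i) < σ' (pfIdx1 i))),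
      Finset.univ.filter (fun i : Fin n => σ' (pfIdx2 i) < σ' (pfIdx1 i))))
  · intro σE _
    exact Finset.mem_univ _
  · intro σ' _
    rw [Finset.mem_product]
    constructor
    · rw [Finset.mem_filter]
      refine ⟨Finset.mem_univ _, ?_⟩
      intro i
      rw [mulTauE_p1, mulTauE_p2]
      by_cases hi : i ∈ Finset.univ.filter (fun i : Fin n => σ' (pfIdx2 i) < σ' (pfIdx1 i))
      · rw [if_pos hi, if_pos hi]
        exact (Finset.mem_filter.mp hi).2
      · rw [if_neg hi, if_neg hi]
        have hcond : ¬ (σ' (pfIdx2 i) < σ' (pfIdx1 i)) := by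
          intro hcond
          exact hi (Finset.mem_filter.mpr ⟨Finset.mem_univ _, hcond⟩)
        rcases lt_or_gt_of_ne (hne12 σ' i) with h | h
        · exact h
        · exact absurd h hcond
    · exact Finset.mem_univ _
  · intro σE hσE
    rw [Finset.mem_product, Finset.mem_filter] at hσE
    obtain ⟨⟨_, hadm⟩, _⟩ := hσE
    have hE : Finset.univ.filter
        (fun i : Fin n => (σE.1 * tauE σE.2) (pfIdx2 i) < (σE.1 * tauE σE.2) (pfIdx1 i))
        = σE.2 := by
      ext i
      rw [Finset.mem_filter, mulTauE_p1, mulTauE_p2]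
      by_cases hi : i ∈ σE.2
      · rw [if_pos hi, if_pos hi]
        simp only [Finset.mem_univ, true_and]
        exact ⟨fun _ => hi, fun _ => hadm i⟩
      · rw [if_neg hi, if_neg hi]
        simp only [Finset.mem_univ, true_and]
        exact ⟨fun hcond => absurd hcond (lt_asymm (hadm i)), fun h => absurd h hi⟩
    rw [hE]
    have : σE.1 * tauE σE.2 * tauE σE.2 = σE.1 := by
      rw [mul_assoc, tauE_sq, mul_one]
    rw [this]
  · intro σ' _
    simp only
    rw [mul_assoc, tauE_sq, mul_one]
  · intro σE _
    rfl

def boolEquiv {n : ℕ} : (Fin n → Bool) ≃ Finset (Fin n) where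
  toFun := fun ε => Finset.univ.filter (fun i => ε i = true)
  invFun := fun E => fun i => decide (i ∈ E)
  left_inv := by
    intro ε
    funext i
    simp
  right_inv := by
    intro E
    ext i
    simp

end PfAux
namespace PfAux

open Finset

variable {R : Type*} [Ring R] [Algebra ℂ R] {n : ℕ}
variable {lam : ℂ} {p q : Fin (2*n) → Fin (2*n) → ℂ} {a : Fin (2*n) → Fin (2*n) → R}

def mw (φ : Fin n → Fin (2*n) × Fin (2*n)) : Fin (2*n) → Fin (2*n) := fun t =>
  if t.1 % 2 = 0 then (φ ⟨t.1/2, by have := t.isLt; omega⟩).1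
  else (φ ⟨t.1/2, by have := t.isLt; omega⟩).2

lemma mw_p1 (φ : Fin n → Fin (2*n) × Fin (2*n)) (i : Fin n) : mw φ (pfIdx1 i) = (φ i).1 := by
  have hidx : ∀ (h : ((pfIdx1 i : Fin (2*n)) : ℕ)/2 < n),
      (⟨((pfIdx1 i : Fin (2*n)) : ℕ)/2, h⟩ : Fin n) = i :=
    fun h => Fin.ext (by simp only [pfIdx1_val]; omega)
  unfold mw
  rw [if_pos (by simp only [pfIdx1_val]; omega), hidx]

lemma mw_p2 (φ : Fin n → Fin (2*n) × Fin (2*n)) (i : Fin n) : mw φ (pfIdx2 i) = (φ i).2 := by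
  have hidx : ∀ (h : ((pfIdx2 i : Fin (2*n)) : ℕ)/2 < n),
      (⟨((pfIdx2 i : Fin (2*n)) : ℕ)/2, h⟩ : Fin n) = i :=
    fun h => Fin.ext (by simp only [pfIdx2_val]; omega)
  unfold mw
  rw [if_neg (by simp only [pfIdx2_val]; omega), hidx]

lemma core (φ : Fin n → Fin (2*n) × Fin (2*n)) :
    ∑ σ ∈ Finset.univ.filter
        (fun σ : Equiv.Perm (Fin (2*n)) => ∀ i : Fin n, σ (pfIdx1 i) < σ (pfIdx2 i)),
      Ww p ⇑σ • ordProd (fun i : Fin n =>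
        a (σ (pfIdx1 i)) (φ i).1 * a (σ (pfIdx2 i)) (φ i).2
          - p (σ (pfIdx1 i)) (σ (pfIdx2 i))
            • (a (σ (pfIdx2 i)) (φ i).1 * a (σ (pfIdx1 i)) (φ i).2))
      = Cw p a (mw φ) := by
  rw [Cw, sum_over_perms (fun σ' => Ww p ⇑σ' • ordProd (fun t => a (σ' t) (mw φ t)))]
  apply Finset.sum_congr rfl
  intro σ hσ
  rw [Finset.mem_filter] at hσ
  have hadm := hσ.2
  have hterm : ∀ E : Finset (Fin n),
      Ww p ⇑(σ * tauE E) • ordProd (fun t => a ((σ * tauE E) t) (mw φ t))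
        = ((∏ i ∈ E, -(p (σ (pfIdx1 i)) (σ (pfIdx2 i)))) * Ww p ⇑σ)
            • ordProd (fun i : Fin n =>
                if i ∈ E then a (σ (pfIdx2 i)) (φ i).1 * a (σ (pfIdx1 i)) (φ i).2
                else a (σ (pfIdx1 i)) (φ i).1 * a (σ (pfIdx2 i)) (φ i).2) := by
    intro E
    rw [Ww_tauE σ hadm E]
    congr 1
    rw [← pairJoin (fun t => a ((σ * tauE E) t) (mw φ t))]
    apply ordProd_congr
    intro i
    rw [mulTauE_p1, mulTauE_p2, mw_p1, mw_p2]
    by_cases hi : i ∈ E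
    · rw [if_pos hi, if_pos hi, if_pos hi]
    · rw [if_neg hi, if_neg hi, if_neg hi]
  rw [Finset.sum_congr rfl (fun E _ => hterm E)]
  have hfac : (fun i : Fin n =>
      a (σ (pfIdx1 i)) (φ i).1 * a (σ (pfIdx2 i)) (φ i).2
        - p (σ (pfIdx1 i)) (σ (pfIdx2 i))
          • (a (σ (pfIdx2 i)) (φ i).1 * a (σ (pfIdx1 i)) (φ i).2))
      = (fun i : Fin n => ∑ e : Bool,
          if e then (-(p (σ (pfIdx1 i)) (σ (pfIdx2 i))))
              • (a (σ (pfIdx2 i)) (φ i).1 * a (σ (pfIdx1 i)) (φ i).2)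
          else a (σ (pfIdx1 i)) (φ i).1 * a (σ (pfIdx2 i)) (φ i).2) := by
    funext i
    rw [Fintype.sum_bool, if_pos rfl, if_neg (by simp)]
    rw [sub_eq_add_neg, add_comm, neg_smul]
  rw [hfac, ordProd_sum, Finset.smul_sum]
  rw [← Equiv.sum_comp (boolEquiv (n := n)) (fun E : Finset (Fin n) =>
      ((∏ i ∈ E, -(p (σ (pfIdx1 i)) (σ (pfIdx2 i)))) * Ww p ⇑σ)
        • ordProd (fun i : Fin n =>
            if i ∈ E then a (σ (pfIdx2 i)) (φ i).1 * a (σ (pfIdx1 i)) (φ i).2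
            else a (σ (pfIdx1 i)) (φ i).1 * a (σ (pfIdx2 i)) (φ i).2))]
  apply Finset.sum_congr rfl
  intro ε _
  have hz : (fun i : Fin n =>
      if ε i then (-(p (σ (pfIdx1 i)) (σ (pfIdx2 i))))
          • (a (σ (pfIdx2 i)) (φ i).1 * a (σ (pfIdx1 i)) (φ i).2)
      else a (σ (pfIdx1 i)) (φ i).1 * a (σ (pfIdx2 i)) (φ i).2)
      = (fun i : Fin n => (if ε i then -(p (σ (pfIdx1 i)) (σ (pfIdx2 i))) else 1)
          • (if ε i then a (σ (pfIdx2 i)) (φ i).1 * a (σ (pfIdx1 i)) (φ i).2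
             else a (σ (pfIdx1 i)) (φ i).1 * a (σ (pfIdx2 i)) (φ i).2)) := by
    funext i
    by_cases hi : ε i
    · rw [if_pos hi, if_pos hi, if_pos hi]
    · rw [if_neg hi, if_neg hi, if_neg hi, one_smul]
  rw [hz, ordProd_smul, smul_smul]
  have hmem : ∀ i : Fin n, i ∈ boolEquiv ε ↔ ε i = true := by
    intro i
    simp [boolEquiv]
  have hprod : (∏ i : Fin n, (if ε i then -(p (σ (pfIdx1 i)) (σ (pfIdx2 i))) else 1))
      = ∏ i ∈ boolEquiv ε, -(p (σ (pfIdx1 i)) (σ (pfIdx2 i))) := by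
    rw [show (boolEquiv ε : Finset (Fin n))
        = Finset.univ.filter (fun i => ε i = true) from rfl]
    rw [Finset.prod_filter]
  have hword : (fun i : Fin n =>
      if ε i then a (σ (pfIdx2 i)) (φ i).1 * a (σ (pfIdx1 i)) (φ i).2
      else a (σ (pfIdx1 i)) (φ i).1 * a (σ (pfIdx2 i)) (φ i).2)
      = (fun i : Fin n =>
        if i ∈ boolEquiv ε then a (σ (pfIdx2 i)) (φ i).1 * a (σ (pfIdx1 i)) (φ i).2
        else a (σ (pfIdx1 i)) (φ i).1 * a (σ (pfIdx2 i)) (φ i).2) := by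
    funext i
    by_cases hi : ε i = true
    · rw [if_pos hi, if_pos ((hmem i).mpr hi)]
    · rw [if_neg hi, if_neg (fun h => hi ((hmem i).mp h))]
  rw [hprod, hword, mul_comm]

end PfAux
namespace PfAux

open Finset

variable {R : Type*} [Ring R] [Algebra ℂ R]

lemma sum_trich {β : Type*} [AddCommMonoid β] {M : ℕ} (f : Fin M → Fin M → β) :
    (∑ k : Fin M, ∑ l : Fin M, f k l)
      = (∑ kl ∈ Finset.univ.filter (fun kl : Fin M × Fin M => kl.1 < kl.2),
          (f kl.1 kl.2 + f kl.2 kl.1))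
        + ∑ k : Fin M, f k k := by
  have h0 : (∑ k : Fin M, ∑ l : Fin M, f k l)
      = ∑ kl ∈ (Finset.univ ×ˢ Finset.univ : Finset (Fin M × Fin M)), f kl.1 kl.2 := by
    rw [Finset.sum_product']
  rw [h0]
  have h1 := Finset.sum_filter_add_sum_filter_not
    (Finset.univ ×ˢ Finset.univ : Finset (Fin M × Fin M))
    (fun kl => kl.1 < kl.2) (fun kl => f kl.1 kl.2)
  rw [← h1]
  have h2 := Finset.sum_filter_add_sum_filter_not
    ((Finset.univ ×ˢ Finset.univ : Finset (Fin M × Fin M)).filter (fun kl => ¬ kl.1 < kl.2))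
    (fun kl => kl.2 < kl.1) (fun kl => f kl.1 kl.2)
  rw [← h2]
  have e1 : ((Finset.univ ×ˢ Finset.univ : Finset (Fin M × Fin M)).filter
      (fun kl => ¬ kl.1 < kl.2)).filter (fun kl => kl.2 < kl.1)
      = (Finset.univ ×ˢ Finset.univ : Finset (Fin M × Fin M)).filter
          (fun kl => kl.2 < kl.1) := by
    ext kl
    simp only [Finset.mem_filter]
    constructor
    · rintro ⟨⟨h3, _⟩, h4⟩
      exact ⟨h3, h4⟩
    · rintro ⟨h3, h4⟩
      exact ⟨⟨h3, lt_asymm h4⟩, h4⟩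
  have e2 : (∑ kl ∈ (Finset.univ ×ˢ Finset.univ : Finset (Fin M × Fin M)).filter
        (fun kl => kl.2 < kl.1), f kl.1 kl.2)
      = ∑ kl ∈ (Finset.univ ×ˢ Finset.univ : Finset (Fin M × Fin M)).filter
          (fun kl => kl.1 < kl.2), f kl.2 kl.1 := by
    apply Finset.sum_nbij' (i := fun kl : Fin M × Fin M => (kl.2, kl.1))
      (j := fun kl : Fin M × Fin M => (kl.2, kl.1))
    · intro kl hkl
      rw [Finset.mem_filter] at hkl ⊢
      exact ⟨by simp, hkl.2⟩
    · intro kl hkl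
      rw [Finset.mem_filter] at hkl ⊢
      exact ⟨by simp, hkl.2⟩
    · intro kl _; rfl
    · intro kl _; rfl
    · intro kl _; rfl
  have e3 : (∑ kl ∈ ((Finset.univ ×ˢ Finset.univ : Finset (Fin M × Fin M)).filter
        (fun kl => ¬ kl.1 < kl.2)).filter (fun kl => ¬ kl.2 < kl.1), f kl.1 kl.2)
      = ∑ k : Fin M, f k k := by
    apply Finset.sum_nbij' (i := fun kl : Fin M × Fin M => kl.1)
      (j := fun k : Fin M => (k, k))
    · intro kl _; exact Finset.mem_univ _
    · intro k _
      simp only [Finset.mem_filter]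
      exact ⟨⟨by simp, lt_irrefl _⟩, lt_irrefl _⟩
    · intro kl hkl
      simp only [Finset.mem_filter] at hkl
      obtain ⟨⟨_, h3⟩, h4⟩ := hkl
      have : kl.1 = kl.2 := le_antisymm (not_lt.mp h4) (not_lt.mp h3)
      exact Prod.ext rfl this
    · intro k _; rfl
    · intro kl hkl
      simp only [Finset.mem_filter] at hkl
      obtain ⟨⟨_, h3⟩, h4⟩ := hkl
      have : kl.1 = kl.2 := le_antisymm (not_lt.mp h4) (not_lt.mp h3)
      rw [← this]
  rw [e1, e2, e3]
  simp only [Finset.univ_product_univ]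
  rw [← add_assoc, Finset.sum_add_distrib]

section Main

variable {n : ℕ} {lam : ℂ} {p q : Fin (2*n) → Fin (2*n) → ℂ}
  {a b c : Fin (2*n) → Fin (2*n) → R}
  (hlam : lam ≠ -1) (hpq : ParamConds p q) (hpl : PLambdaCond p q lam)
  (ha : IsQuantumMatrix p q a)
  (hb0 : ∀ i, b i i = 0)
  (hbskew : ∀ i j : Fin (2*n), i < j → b j i = -(q i j) • b i j)
  (hcomm : ∀ i j k l, Commute (b i j) (a k l))
  (hc : ∀ i j, c i j = ∑ k, ∑ l, a i k * b k l * a j l)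

include hb0 hbskew hcomm hc in
lemma c_pairform (u v : Fin (2*n)) :
    c u v = ∑ kl ∈ Finset.univ.filter (fun kl : Fin (2*n) × Fin (2*n) => kl.1 < kl.2),
      b kl.1 kl.2 * (a u kl.1 * a v kl.2 - (q kl.1 kl.2) • (a u kl.2 * a v kl.1)) := by
  rw [hc u v]
  have hmove : ∀ k l : Fin (2*n), a u k * b k l * a v l = b k l * (a u k * a v l) := by
    intro k l
    rw [← (hcomm k l u k).eq, mul_assoc]
  rw [Finset.sum_congr rfl (fun k _ => Finset.sum_congr rfl (fun l _ => hmove k l))]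
  rw [sum_trich (fun k l => b k l * (a u k * a v l))]
  have hdiag : (∑ k : Fin (2*n), b k k * (a u k * a v k)) = 0 := by
    apply Finset.sum_eq_zero
    intro k _
    rw [hb0 k, zero_mul]
  rw [hdiag, add_zero]
  apply Finset.sum_congr rfl
  intro kl hkl
  rw [Finset.mem_filter] at hkl
  have hlt := hkl.2
  rw [hbskew kl.1 kl.2 hlt, smul_mul_assoc, neg_smul, ← sub_eq_add_neg, mul_sub,
    mul_smul_comm]

include hlam hpq hpl ha hb0 hbskew hcomm hc in
lemma c_antisym {i j : Fin (2*n)} (hij : i < j) : c j i = -(q i j) • c i j := by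
  rw [c_pairform hb0 hbskew hcomm hc j i, c_pairform hb0 hbskew hcomm hc i j,
    Finset.smul_sum]
  apply Finset.sum_congr rfl
  intro kl hkl
  rw [Finset.mem_filter] at hkl
  have hkl2 := hkl.2
  rw [relU1 hpq ha hij hkl2, mul_smul_comm]

include hlam hpq hpl ha hb0 hbskew hcomm hc in
lemma c_gform {u v : Fin (2*n)} (huv : u < v) :
    c u v = ∑ kl : Fin (2*n) × Fin (2*n),
      (if kl.1 < kl.2 then
        b kl.1 kl.2 * (a u kl.1 * a v kl.2 - (p u v) • (a v kl.1 * a u kl.2))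
       else 0) := by
  rw [c_pairform hb0 hbskew hcomm hc u v, Finset.sum_filter]
  apply Finset.sum_congr rfl
  intro kl _
  by_cases hlt : kl.1 < kl.2
  · rw [if_pos hlt, if_pos hlt]
    congr 1
    rw [relR5 hlam hpq hpl ha huv hlt]
  · rw [if_neg hlt, if_neg hlt]

end Main

end PfAux
namespace PfAux

open Finset

variable {R : Type*} [Ring R] [Algebra ℂ R]

section Final

variable {n : ℕ} {lam : ℂ} {p q : Fin (2*n) → Fin (2*n) → ℂ}
  {a b c : Fin (2*n) → Fin (2*n) → R}

lemma mw_phitau (τ : Equiv.Perm (Fin (2*n))) :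
    mw (fun i : Fin n => (τ (pfIdx1 i), τ (pfIdx2 i))) = ⇑τ := by
  funext t
  unfold mw
  by_cases ht : t.1 % 2 = 0
  · rw [if_pos ht]
    simp only
    congr 1
    apply Fin.ext
    simp only [pfIdx1_val]
    omega
  · rw [if_neg ht]
    simp only
    congr 1
    apply Fin.ext
    simp only [pfIdx2_val]
    omega

lemma pf_transform (hlam : lam ≠ -1) (hpq : ParamConds p q) (hpl : PLambdaCond p q lam)
    (ha : IsQuantumMatrix p q a)
    (hb0 : ∀ i, b i i = 0)
    (hbskew : ∀ i j : Fin (2*n), i < j → b j i = -(q i j) • b i j)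
    (hcomm : ∀ i j k l, Commute (b i j) (a k l))
    (hc : ∀ i j, c i j = ∑ k, ∑ l, a i k * b k l * a j l) :
    Pf p c = rdet q a * Pf p b := by
  have hcdet_comm : ∀ (B : R), (∀ k l, Commute B (a k l)) → Commute B (cdet p a) := by
    intro B hB
    unfold cdet
    apply Commute.sum_right
    intro σ _
    apply Commute.smul_right
    apply Commute.list_prod_right
    intro x hx
    rw [List.mem_ofFn] at hx
    obtain ⟨t, rfl⟩ := hx
    exact hB _ _
  rw [Pf]
  have hstep1 : ∀ σ ∈ Finset.univ.filter
      (fun σ : Equiv.Perm (Fin (2*n)) => ∀ i : Fin n, σ (pfIdx1 i) < σ (pfIdx2 i)),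
      qSign p id σ • ordProd (fun i : Fin n => c (σ (pfIdx1 i)) (σ (pfIdx2 i)))
      = ∑ φ ∈ (Finset.univ : Finset (Fin n → Fin (2*n) × Fin (2*n))).filter
            (fun φ => ∀ i, (φ i).1 < (φ i).2),
          (ordProd fun i : Fin n => b (φ i).1 (φ i).2)
            * (Ww p ⇑σ • ordProd (fun i : Fin n =>
                a (σ (pfIdx1 i)) (φ i).1 * a (σ (pfIdx2 i)) (φ i).2
                  - p (σ (pfIdx1 i)) (σ (pfIdx2 i))
                    • (a (σ (pfIdx2 i)) (φ i).1 * a (σ (pfIdx1 i)) (φ i).2))) := by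
    intro σ hσ
    rw [Finset.mem_filter] at hσ
    have hadm := hσ.2
    have hcg : (fun i : Fin n => c (σ (pfIdx1 i)) (σ (pfIdx2 i)))
        = fun i : Fin n => ∑ kl : Fin (2*n) × Fin (2*n),
            (if kl.1 < kl.2 then
              b kl.1 kl.2 * (a (σ (pfIdx1 i)) kl.1 * a (σ (pfIdx2 i)) kl.2
                - (p (σ (pfIdx1 i)) (σ (pfIdx2 i)))
                  • (a (σ (pfIdx2 i)) kl.1 * a (σ (pfIdx1 i)) kl.2))
             else 0) := by
      funext i
      exact c_gform hlam hpq hpl ha hb0 hbskew hcomm hc (hadm i)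
    rw [hcg, ordProd_sum]
    rw [← Finset.sum_filter_add_sum_filter_not Finset.univ
        (fun φ : Fin n → Fin (2*n) × Fin (2*n) => ∀ i, (φ i).1 < (φ i).2)]
    have hbad : (∑ φ ∈ Finset.univ.filter
        (fun φ : Fin n → Fin (2*n) × Fin (2*n) => ¬ ∀ i, (φ i).1 < (φ i).2),
        ordProd (fun i : Fin n =>
          if (φ i).1 < (φ i).2 then
            b (φ i).1 (φ i).2 * (a (σ (pfIdx1 i)) (φ i).1 * a (σ (pfIdx2 i)) (φ i).2
              - (p (σ (pfIdx1 i)) (σ (pfIdx2 i)))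
                • (a (σ (pfIdx2 i)) (φ i).1 * a (σ (pfIdx1 i)) (φ i).2))
          else 0)) = 0 := by
      apply Finset.sum_eq_zero
      intro φ hφ
      rw [Finset.mem_filter] at hφ
      obtain ⟨i, hi⟩ := not_forall.mp hφ.2
      exact ordProd_eq_zero i (by rw [if_neg hi])
    rw [hbad, add_zero, Finset.smul_sum]
    apply Finset.sum_congr rfl
    intro φ hφ
    rw [Finset.mem_filter] at hφ
    have hgood := hφ.2
    have hif : (fun i : Fin n =>
        if (φ i).1 < (φ i).2 then
          b (φ i).1 (φ i).2 * (a (σ (pfIdx1 i)) (φ i).1 * a (σ (pfIdx2 i)) (φ i).2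
            - (p (σ (pfIdx1 i)) (σ (pfIdx2 i)))
              • (a (σ (pfIdx2 i)) (φ i).1 * a (σ (pfIdx1 i)) (φ i).2))
        else 0)
        = fun i : Fin n =>
            b (φ i).1 (φ i).2 * (a (σ (pfIdx1 i)) (φ i).1 * a (σ (pfIdx2 i)) (φ i).2
              - (p (σ (pfIdx1 i)) (σ (pfIdx2 i)))
                • (a (σ (pfIdx2 i)) (φ i).1 * a (σ (pfIdx1 i)) (φ i).2)) :=
      funext (fun i => if_pos (hgood i))
    rw [hif]
    rw [ordProd_mul_split (fun i : Fin n => b (φ i).1 (φ i).2)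
      (fun i : Fin n => a (σ (pfIdx1 i)) (φ i).1 * a (σ (pfIdx2 i)) (φ i).2
        - (p (σ (pfIdx1 i)) (σ (pfIdx2 i)))
          • (a (σ (pfIdx2 i)) (φ i).1 * a (σ (pfIdx1 i)) (φ i).2))
      (fun i j _ => by
        apply Commute.sub_left
        · exact ((hcomm _ _ _ _).symm.mul_left (hcomm _ _ _ _).symm)
        · exact Commute.smul_left ((hcomm _ _ _ _).symm.mul_left (hcomm _ _ _ _).symm) _)]
    rw [qSign_eq_Ww, ← mul_smul_comm]
  rw [Finset.sum_congr rfl hstep1, Finset.sum_comm]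
  have hstep2 : ∀ φ ∈ (Finset.univ : Finset (Fin n → Fin (2*n) × Fin (2*n))).filter
      (fun φ => ∀ i, (φ i).1 < (φ i).2),
      (∑ σ ∈ Finset.univ.filter
          (fun σ : Equiv.Perm (Fin (2*n)) => ∀ i : Fin n, σ (pfIdx1 i) < σ (pfIdx2 i)),
        (ordProd fun i : Fin n => b (φ i).1 (φ i).2)
          * (Ww p ⇑σ • ordProd (fun i : Fin n =>
              a (σ (pfIdx1 i)) (φ i).1 * a (σ (pfIdx2 i)) (φ i).2
                - p (σ (pfIdx1 i)) (σ (pfIdx2 i))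
                  • (a (σ (pfIdx2 i)) (φ i).1 * a (σ (pfIdx1 i)) (φ i).2))))
      = (ordProd fun i : Fin n => b (φ i).1 (φ i).2)
          * (if Function.Injective (mw φ) then Ww p (mw φ) • cdet p a else 0) := by
    intro φ _
    rw [← Finset.mul_sum, core φ, CW hpq ha]
  rw [Finset.sum_congr rfl hstep2]
  rw [← Finset.sum_filter_add_sum_filter_not
      ((Finset.univ : Finset (Fin n → Fin (2*n) × Fin (2*n))).filter
        (fun φ => ∀ i, (φ i).1 < (φ i).2))
      (fun φ => Function.Injective (mw φ))]
  have hnoninj : (∑ φ ∈ ((Finset.univ : Finset (Fin n → Fin (2*n) × Fin (2*n))).filter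
      (fun φ => ∀ i, (φ i).1 < (φ i).2)).filter
        (fun φ => ¬ Function.Injective (mw φ)),
      (ordProd fun i : Fin n => b (φ i).1 (φ i).2)
        * (if Function.Injective (mw φ) then Ww p (mw φ) • cdet p a else 0)) = 0 := by
    apply Finset.sum_eq_zero
    intro φ hφ
    rw [Finset.mem_filter] at hφ
    rw [if_neg hφ.2, mul_zero]
  rw [hnoninj, add_zero]
  have hbij : (∑ φ ∈ ((Finset.univ : Finset (Fin n → Fin (2*n) × Fin (2*n))).filter
      (fun φ => ∀ i, (φ i).1 < (φ i).2)).filter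
        (fun φ => Function.Injective (mw φ)),
      (ordProd fun i : Fin n => b (φ i).1 (φ i).2)
        * (if Function.Injective (mw φ) then Ww p (mw φ) • cdet p a else 0))
      = ∑ τ ∈ Finset.univ.filter
          (fun σ : Equiv.Perm (Fin (2*n)) => ∀ i : Fin n, σ (pfIdx1 i) < σ (pfIdx2 i)),
        (ordProd fun i : Fin n => b (τ (pfIdx1 i)) (τ (pfIdx2 i)))
          * (Ww p ⇑τ • cdet p a) := by
    refine Finset.sum_bij'
      (fun φ hφ => Equiv.ofBijective (mw φ)
        ((Finite.injective_iff_bijective).mp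
          ((Finset.mem_filter.mp hφ).2)))
      (fun τ _ => (fun i : Fin n => (τ (pfIdx1 i), τ (pfIdx2 i))))
      ?_ ?_ ?_ ?_ ?_
    · intro φ hφ
      rw [Finset.mem_filter]
      refine ⟨Finset.mem_univ _, ?_⟩
      intro i
      have hgood := (Finset.mem_filter.mp (Finset.mem_filter.mp hφ).1).2
      show mw φ (pfIdx1 i) < mw φ (pfIdx2 i)
      rw [mw_p1, mw_p2]
      exact hgood i
    · intro τ hτ
      rw [Finset.mem_filter] at hτ
      simp only [Finset.mem_filter]
      refine ⟨⟨Finset.mem_univ _, fun i => hτ.2 i⟩, ?_⟩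
      rw [mw_phitau]
      exact τ.injective
    · intro φ hφ
      funext i
      have h1 : mw φ (pfIdx1 i) = (φ i).1 := mw_p1 φ i
      have h2 : mw φ (pfIdx2 i) = (φ i).2 := mw_p2 φ i
      exact Prod.ext h1 h2
    · intro τ hτ
      apply Equiv.ext
      intro t
      show mw (fun i : Fin n => (τ (pfIdx1 i), τ (pfIdx2 i))) t = τ t
      rw [mw_phitau]
    · intro φ hφ
      have hinj := (Finset.mem_filter.mp hφ).2
      rw [if_pos hinj]
      congr 1
      · apply ordProd_congr
        intro i
        rw [show (Equiv.ofBijective (mw φ) _) (pfIdx1 i) = mw φ (pfIdx1 i) from rfl,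
          show (Equiv.ofBijective (mw φ) _) (pfIdx2 i) = mw φ (pfIdx2 i) from rfl,
          mw_p1, mw_p2]
  rw [hbij]
  have hstep4 : ∀ τ ∈ Finset.univ.filter
      (fun σ : Equiv.Perm (Fin (2*n)) => ∀ i : Fin n, σ (pfIdx1 i) < σ (pfIdx2 i)),
      (ordProd fun i : Fin n => b (τ (pfIdx1 i)) (τ (pfIdx2 i))) * (Ww p ⇑τ • cdet p a)
      = rdet q a * (qSign p id τ • ordProd (fun i : Fin n => b (τ (pfIdx1 i)) (τ (pfIdx2 i)))) := by
    intro τ _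
    have hcom : Commute (ordProd fun i : Fin n => b (τ (pfIdx1 i)) (τ (pfIdx2 i))) (cdet p a) := by
      apply hcdet_comm
      intro k l
      apply Commute.list_prod_left
      intro x hx
      rw [List.mem_ofFn] at hx
      obtain ⟨t, rfl⟩ := hx
      exact hcomm _ _ _ _
    rw [mul_smul_comm, hcom.eq, ← cdet_eq_rdet hlam hpq hpl ha, qSign_eq_Ww]
    exact (mul_smul_comm _ _ _).symm
  rw [Finset.sum_congr rfl hstep4, ← Finset.mul_sum, Pf]

end Final

end PfAux
/-- The column analog of the Pfaffian transformation rule: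
for `q`-antisymmetric `B` and `C = ABAᵀ`, `C` is `q`-antisymmetric and
`Pf_p(C) = det_q(A) Pf_p(B)`. -/
theorem pfaffian_transformation_column {R : Type*} [Ring R] [Algebra ℂ R]
    {n : ℕ} (lam : ℂ) (hlam : lam ≠ -1)
    (p q : Fin (2 * n) → Fin (2 * n) → ℂ)
    (hpq : ParamConds p q) (hpl : PLambdaCond p q lam)
    (a : Fin (2 * n) → Fin (2 * n) → R) (ha : IsQuantumMatrix p q a)
    (b : Fin (2 * n) → Fin (2 * n) → R)
    (hb0 : ∀ i, b i i = 0)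
    (hbskew : ∀ i j : Fin (2 * n), i < j → b j i = -(q i j) • b i j)
    (hcomm : ∀ i j k l, Commute (b i j) (a k l))
    (c : Fin (2 * n) → Fin (2 * n) → R)
    (hc : ∀ i j, c i j = ∑ k, ∑ l, a i k * b k l * a j l) :
    (∀ i j : Fin (2 * n), i < j → c j i = -(q i j) • c i j) ∧
    Pf p c = rdet q a * Pf p b := by
  constructor
  · intro i j hij
    exact PfAux.c_antisym hlam hpq hpl ha hb0 hbskew hcomm hc hij
  · exact PfAux.pf_transform hlam hpq hpl ha hb0 hbskew hcomm hc
end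
end
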